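/- arXiv:1802.04608 — 6 statements merged into one kernel-verified Lean document; each statement's English description precedes it below -/
import Mathlib

section
/- Let n and r be positive integers and suppose the cardinality |S(n,r)| of the Lee sphere is a prime p. Then there exists a PL(n,r)-code (not assumed linear) if and only if there exists a group homomorphism φ : ℤ^n → C_p, where C_p is the cyclic group of order p, whose restriction to S(n,r) is a bijection onto C_p. -/
/-- The Lee sphere of radius `r` in `ℤ^n`. -/
def LeeSphere (n r : ℕ) : Set (Fin n → ℤ) :=
  {x | (∑ i, |x i|) ≤ (r : ℤ)}

/-- `C` is a `PL(n,r)`-code (not assumed linear): a subset of `ℤ^n` such that every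
point of `ℤ^n` is within Lee distance `r` of exactly one codeword. -/
def IsPLCode (n r : ℕ) (C : Set (Fin n → ℤ)) : Prop :=
  ∀ x : Fin n → ℤ, ∃! c, c ∈ C ∧ (∑ i, |x i - c i|) ≤ (r : ℤ)

/-! ### Basic facts about the Lee sphere -/

lemma leeSphere_finite (n r : ℕ) : (LeeSphere n r).Finite := by
  apply Set.Finite.subset (Set.Finite.pi (fun i : Fin n => Set.finite_Icc (-(r:ℤ)) (r:ℤ)))
  intro x hx
  have h : ∀ i, |x i| ≤ (r:ℤ) := fun i =>
    le_trans (Finset.single_le_sum (f := fun i => |x i|) (fun i _ => abs_nonneg _)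
      (Finset.mem_univ i)) hx
  intro i _
  exact Set.mem_Icc.2 (abs_le.1 (h i))

lemma abs_coord_le {n r : ℕ} {x : Fin n → ℤ} (hx : x ∈ LeeSphere n r) (i : Fin n) :
    |x i| ≤ (r:ℤ) :=
  le_trans (Finset.single_le_sum (f := fun i => |x i|) (fun i _ => abs_nonneg _)
    (Finset.mem_univ i)) hx

lemma zero_mem_leeSphere (n r : ℕ) : (0 : Fin n → ℤ) ∈ LeeSphere n r := by
  simp [LeeSphere]

lemma single_mem_leeSphere {n r : ℕ} (i : Fin n) (k : ℤ) (hk : |k| ≤ r) :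
    Pi.single i k ∈ LeeSphere n r := by
  simp only [LeeSphere, Set.mem_setOf_eq]
  calc (∑ j, |Pi.single i k j|) = |k| := by
        rw [Finset.sum_eq_single i]
        · simp
        · intro j _ hj; simp [Pi.single_apply, hj]
        · simp
    _ ≤ (r:ℤ) := hk

lemma leeSphere_card_lower {n r : ℕ} (hn : 0 < n) (hr : 0 < r) :
    2 * r + 1 ≤ (LeeSphere n r).ncard := by
  classical
  set i0 : Fin n := ⟨0, hn⟩
  have hinj : Set.InjOn (fun k : ℤ => (Pi.single i0 k : Fin n → ℤ))
      (Set.Icc (-(r:ℤ)) (r:ℤ)) := by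
    intro a _ b _ hab
    have := congrFun hab i0
    simpa using this
  have hsub : (fun k : ℤ => (Pi.single i0 k : Fin n → ℤ)) '' (Set.Icc (-(r:ℤ)) (r:ℤ))
      ⊆ LeeSphere n r := by
    rintro _ ⟨k, hk, rfl⟩
    exact single_mem_leeSphere i0 k (abs_le.2 (Set.mem_Icc.1 hk))
  have h1 : ((fun k : ℤ => (Pi.single i0 k : Fin n → ℤ)) '' (Set.Icc (-(r:ℤ)) (r:ℤ))).ncard
      = (Set.Icc (-(r:ℤ)) (r:ℤ)).ncard := Set.ncard_image_of_injOn hinj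
  have h2 : (Set.Icc (-(r:ℤ)) (r:ℤ)).ncard = 2*r+1 := by
    rw [show (Set.Icc (-(r:ℤ)) (r:ℤ)) = ↑(Finset.Icc (-(r:ℤ)) (r:ℤ)) by simp,
      Set.ncard_coe_finset]
    rw [Int.card_Icc]
    simp
    omega
  calc 2*r+1 = ((fun k : ℤ => (Pi.single i0 k : Fin n → ℤ)) '' (Set.Icc (-(r:ℤ)) (r:ℤ))).ncard := by
        rw [h1, h2]
    _ ≤ (LeeSphere n r).ncard := Set.ncard_le_ncard hsub (leeSphere_finite n r)

lemma isPLCode_iff {n r : ℕ} (C : Set (Fin n → ℤ)) :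
    IsPLCode n r C ↔ ∀ x, ∃! c, c ∈ C ∧ x - c ∈ LeeSphere n r := by
  have h : ∀ (x c : Fin n → ℤ), (x - c ∈ LeeSphere n r) ↔ (∑ i, |x i - c i|) ≤ (r:ℤ) := by
    intro x c; simp [LeeSphere]
  constructor <;> intro hC x <;> obtain ⟨c, hc1, hc2⟩ := hC x
  · exact ⟨c, ⟨hc1.1, (h x c).2 hc1.2⟩, fun y hy => hc2 y ⟨hy.1, (h x y).1 hy.2⟩⟩
  · exact ⟨c, ⟨hc1.1, (h x c).1 hc1.2⟩, fun y hy => hc2 y ⟨hy.1, (h x y).2 hy.2⟩⟩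

/-! ### The easy direction: a suitable homomorphism gives a perfect code -/

lemma hom_to_code {n r p : ℕ}
    (φ : (Fin n → ℤ) →+ ZMod p) (hφ : Set.BijOn φ (LeeSphere n r) Set.univ) :
    ∃ C : Set (Fin n → ℤ), IsPLCode n r C := by
  refine ⟨{x | φ x = 0}, (isPLCode_iff _).2 fun x => ?_⟩
  obtain ⟨s, hs, hsx⟩ := hφ.2.2 (Set.mem_univ (φ x))
  refine ⟨x - s, ⟨by simp [hsx], by simpa using hs⟩, ?_⟩
  rintro c ⟨hc0, hcS⟩
  have hc0' : φ c = 0 := hc0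
  have h1 : φ (x - c) = φ x := by simp [map_sub, hc0']
  have h2 : x - c = s := hφ.2.1 hcS hs (h1.trans hsx.symm)
  rw [← h2, sub_sub_cancel]

/-! ### Convolution machinery over `AddMonoidAlgebra (ZMod p) G` -/

section Conv
variable {G : Type*} [AddCommGroup G] {p : ℕ} [Fact p.Prime]

noncomputable def Emap (w : G → ZMod p) (x : G) : AddMonoidAlgebra (ZMod p) G →+ ZMod p :=
  AddMonoidHom.mk' (fun f => f.coeff.sum fun a rr => rr * w (x - a)) (by
    intro f g
    apply Finsupp.sum_add_index' <;> intros <;> simp [add_mul])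

lemma Emap_single (w : G → ZMod p) (x a : G) (rr : ZMod p) :
    Emap w x (AddMonoidAlgebra.single a rr) = rr * w (x - a) := by
  show (AddMonoidAlgebra.single a rr).coeff.sum (fun a rr => rr * w (x - a)) = _
  simp [AddMonoidAlgebra.coeff_single, Finsupp.sum_single_index]

lemma Emap_single_mul (w : G → ZMod p) (x : G) (a : G) (rr : ZMod p)
    (h : AddMonoidAlgebra (ZMod p) G) :
    Emap w x (AddMonoidAlgebra.single a rr * h) = rr * Emap w (x - a) h := by
  induction h using AddMonoidAlgebra.induction with
  | zero => show Emap w x (_ * (0:AddMonoidAlgebra (ZMod p) G)) = rr * Emap w (x-a) 0; simp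
  | single_add b s f hbf hs ih =>
    rw [mul_add, map_add, map_add, ih]
    rw [show (AddMonoidAlgebra.single b s : AddMonoidAlgebra (ZMod p) G) = AddMonoidAlgebra.single b s
      from rfl, AddMonoidAlgebra.single_mul_single, Emap_single, Emap_single, mul_add,
      sub_sub, mul_assoc]

lemma Emap_mul (w : G → ZMod p) (x : G) (g h : AddMonoidAlgebra (ZMod p) G) :
    Emap w x (g * h) = g.coeff.sum fun a rr => rr * Emap w (x - a) h := by
  induction g using AddMonoidAlgebra.induction with
  | zero => show Emap w x ((0:AddMonoidAlgebra (ZMod p) G) * h) = Finsupp.sum 0 _; simp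
  | single_add a rr f haf hrr ih =>
    rw [add_mul, map_add, show (AddMonoidAlgebra.single a rr : AddMonoidAlgebra (ZMod p) G)
        = AddMonoidAlgebra.single a rr from rfl,
      Emap_single_mul, ih, AddMonoidAlgebra.coeff_add, AddMonoidAlgebra.coeff_single, Finsupp.sum_add_index' (by simp) (by intros; rw [add_mul]),
      Finsupp.sum_single_index (by simp)]

noncomputable instance instCharPAMA : CharP (AddMonoidAlgebra (ZMod p) G) p :=
  charP_of_injective_ringHom (f := AddMonoidAlgebra.singleZeroRingHom (R := ZMod p) (M := G))
    (fun a b hab => by simpa using (Finsupp.single_injective 0) (congrArg AddMonoidAlgebra.coeff hab)) p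

lemma Emap_const_one (x : G) (g : AddMonoidAlgebra (ZMod p) G) :
    Emap (fun _ => (1:ZMod p)) x g = g.coeff.sum fun _ rr => rr := by
  simp [Emap, AddMonoidHom.mk'_apply]

lemma key_div (w : G → ZMod p) (S : Finset G) (hScard : S.card = p)
    (h1 : ∀ y : G, (∑ t ∈ S, w (y - t)) = 1) :
    ∀ x : G, ∑ t ∈ S, w (x - p • t) = 0 := by
  intro x
  have hp2 : 2 ≤ p := (Fact.out (p := p.Prime)).two_le
  set f : AddMonoidAlgebra (ZMod p) G := ∑ t ∈ S, AddMonoidAlgebra.single t (1:ZMod p) with hf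
  have h1' : ∀ y : G, Emap w y f = 1 := by
    intro y
    rw [hf, map_sum]
    simp only [Emap_single, one_mul]
    exact h1 y
  have tot_f : Emap (fun _ => (1:ZMod p)) 0 f = 0 := by
    rw [hf, map_sum]
    simp only [Emap_single, one_mul]
    simp [hScard]
  have tot_mul : ∀ g : AddMonoidAlgebra (ZMod p) G,
      Emap (fun _ => (1:ZMod p)) 0 (g * f) = 0 := by
    intro g
    rw [Emap_mul]
    have h2 : ∀ a : G, Emap (fun _ => (1:ZMod p)) (0 - a) f = 0 := by
      intro a
      rw [Emap_const_one, ← Emap_const_one 0 f]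
      exact tot_f
    calc (Finsupp.sum g.coeff fun a rr => rr * Emap (fun _ => (1:ZMod p)) (0 - a) f)
        = Finsupp.sum g.coeff fun a rr => (0:ZMod p) := by
          apply Finsupp.sum_congr; intro a _; rw [h2, mul_zero]
      _ = 0 := by simp
  have tot_fpow : Emap (fun _ => (1:ZMod p)) 0 (f ^ (p-1)) = 0 := by
    have h : f ^ (p-1) = f ^ (p-2) * f := by
      rw [← pow_succ]
      congr 1
      omega
    rw [h]; exact tot_mul _
  have hEfp : Emap w x (f ^ p) = 0 := by
    have h : f ^ p = f ^ (p-1) * f := by rw [← pow_succ]; congr 1; omega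
    rw [h, Emap_mul]
    calc (Finsupp.sum (f ^ (p-1)).coeff fun a rr => rr * Emap w (x - a) f)
        = Finsupp.sum (f ^ (p-1)).coeff fun a rr => rr := by
          apply Finsupp.sum_congr; intro a _; rw [h1', mul_one]
      _ = 0 := by rw [← Emap_const_one 0 _]; exact tot_fpow
  have hfrob : f ^ p = ∑ t ∈ S, AddMonoidAlgebra.single (p • t) (1:ZMod p) := by
    rw [hf, sum_pow_char]
    apply Finset.sum_congr rfl
    intro t _
    rw [AddMonoidAlgebra.single_pow, one_pow]
  rw [hfrob, map_sum] at hEfp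
  simpa only [Emap_single, one_mul] using hEfp

end Conv

/-! ### Periodicity of perfect Lee codes modulo `p` -/

section Period
variable {n r p : ℕ} [Fact p.Prime] (C : Set (Fin n → ℤ))

lemma periodicity (hr : 0 < r)
    (hC : ∀ x, ∃! c, c ∈ C ∧ x - c ∈ LeeSphere n r)
    (hcard : (LeeSphere n r).ncard = p) :
    ∀ c ∈ C, ∀ z : Fin n → ℤ, c + p • z ∈ C := by
  classical
  set S : Finset (Fin n → ℤ) := (leeSphere_finite n r).toFinset with hSdef
  have hmemS : ∀ t, t ∈ S ↔ t ∈ LeeSphere n r := fun t => Set.Finite.mem_toFinset _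
  have hScard : S.card = p := by
    rw [← hcard, Set.ncard_eq_toFinset_card _ (leeSphere_finite n r)]
  have htile : ∀ x, ∃! t, t ∈ S ∧ x - t ∈ C := by
    intro x
    obtain ⟨c, ⟨hc, hcs⟩, huniq⟩ := hC x
    refine ⟨x - c, ⟨(hmemS _).2 hcs, by simpa using hc⟩, ?_⟩
    rintro t ⟨htS, htC⟩
    have h1 : (x - t) = c := huniq (x - t) ⟨htC, by simpa using (hmemS _).1 htS⟩
    rw [← h1]; abel
  set w : (Fin n → ℤ) → ZMod p := fun g => if g ∈ C then 1 else 0 with hw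
  have h1 : ∀ y, (∑ t ∈ S, w (y - t)) = 1 := by
    intro y
    obtain ⟨t₀, ⟨ht₀S, ht₀C⟩, huniq⟩ := htile y
    rw [Finset.sum_eq_single t₀]
    · simp [hw, ht₀C]
    · intro t htS htne
      have : y - t ∉ C := fun hmem => htne (huniq t ⟨htS, hmem⟩)
      simp [hw, this]
    · intro h; exact absurd ht₀S h
  have hdiv := key_div w S hScard h1
  have AON : ∀ x, (∃ t ∈ S, x - p • t ∈ C) → ∀ t ∈ S, x - p • t ∈ C := by
    intro x hex
    have hsum := hdiv x
    set k := (S.filter (fun t => x - p • t ∈ C)).card with hk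
    have hsum2 : (k : ZMod p) = 0 := by
      rw [← hsum, hk]
      rw [Finset.card_filter]
      push_cast
      apply Finset.sum_congr rfl
      intro t _
      by_cases h : x - p • t ∈ C <;> simp [hw, h]
    have hdvd : p ∣ k := (ZMod.natCast_eq_zero_iff _ _).1 hsum2
    have hkle : k ≤ p := by
      rw [hk, ← hScard]; exact Finset.card_filter_le _ _
    have hkpos : 0 < k := by
      obtain ⟨t, htS, htC⟩ := hex
      rw [hk]
      exact Finset.card_pos.2 ⟨t, Finset.mem_filter.2 ⟨htS, htC⟩⟩
    have hkp : k = p := Nat.le_antisymm hkle (Nat.le_of_dvd hkpos hdvd)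
    intro t htS
    have hfe : S.filter (fun t => x - p • t ∈ C) = S :=
      Finset.eq_of_subset_of_card_le (Finset.filter_subset _ _) (by omega)
    have := hfe ▸ Finset.mem_filter.1 (hfe.symm ▸ htS)
    exact this.2
  have base : ∀ t ∈ S, ∀ t' ∈ S, ∀ c ∈ C, c + (p • t - p • t') ∈ C := by
    intro t htS t' ht'S c hc
    have h0 : (c + p • t) - p • t ∈ C := by simpa using hc
    have := AON (c + p • t) ⟨t, htS, h0⟩ t' ht'S
    have heq : c + (p • t - p • t') = (c + p • t) - p • t' := by abel
    rw [heq]; exact this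
  set M : AddSubmonoid (Fin n → ℤ) :=
    { carrier := {v | ∀ c ∈ C, c + v ∈ C}
      zero_mem' := by intro c hc; simpa using hc
      add_mem' := by
        intro v u hv hu c hc
        have := hu (c + v) (hv c hc)
        rwa [add_assoc] at this } with hM
  have hMe : ∀ i : Fin n, (p • (Pi.single i 1 : Fin n → ℤ)) ∈ M
      ∧ (-(p • (Pi.single i 1 : Fin n → ℤ))) ∈ M := by
    intro i
    have hiS : (Pi.single i 1 : Fin n → ℤ) ∈ S := (hmemS _).2 <| by
      apply single_mem_leeSphere
      simpa using Nat.one_le_iff_ne_zero.2 hr.ne'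
    have h0S : (0 : Fin n → ℤ) ∈ S := (hmemS _).2 (zero_mem_leeSphere n r)
    constructor
    · intro c hc
      have := base _ hiS _ h0S c hc
      simpa using this
    · intro c hc
      have := base _ h0S _ hiS c hc
      simpa using this
  have zsmul_mem : ∀ (m : ℤ) (v : Fin n → ℤ), v ∈ M → -v ∈ M → m • v ∈ M := by
    intro m v hv hnv
    induction m using Int.induction_on with
    | zero => simpa using M.zero_mem
    | succ k ih => rw [add_smul, one_smul]; exact M.add_mem ih hv
    | pred k ih => rw [sub_smul, one_smul, sub_eq_add_neg]; exact M.add_mem ih hnv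
  intro c hc z
  have hz : (p • z : Fin n → ℤ) = ∑ i, (z i) • ((p • (Pi.single i 1 : Fin n → ℤ))) := by
    have h1 : ∀ i, (z i) • (p • (Pi.single i 1 : Fin n → ℤ)) = p • (Pi.single i (z i)) := by
      intro i
      rw [smul_comm]
      congr 1
      funext j
      simp [Pi.single_apply, mul_ite]
    rw [Finset.sum_congr rfl (fun i _ => h1 i), ← Finset.smul_sum]
    congr 1
    exact (Finset.univ_sum_single z).symm
  have hmem : (p • z : Fin n → ℤ) ∈ M := by
    rw [hz]
    apply AddSubmonoid.sum_mem
    intro i _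
    exact zsmul_mem _ _ (hMe i).1 (hMe i).2
  exact hmem c hc

end Period

/-! ### Vanishing sums of `p`-th roots of unity -/

open Polynomial in
lemma rig {p : ℕ} (hp : p.Prime) [NeZero p] {ω : ℂ} (hω : IsPrimitiveRoot ω p)
    (m : ZMod p → ℕ) (hsum : ∑ j, m j = p)
    (hz : ∑ j, (m j : ℂ) * ω ^ (ZMod.val j) = 0) : ∀ j, m j = 1 := by
  classical
  set P : ℚ[X] := ∑ j : ZMod p, C (m j : ℚ) * X ^ (ZMod.val j) with hP
  have coeffP : ∀ j : ZMod p, P.coeff j.val = (m j : ℚ) := by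
    intro j
    rw [hP, finset_sum_coeff]
    rw [Finset.sum_eq_single j]
    · simp
    · intro j' _ hne
      have hvne : j.val ≠ j'.val := fun h => hne (ZMod.val_injective _ h.symm)
      simp [coeff_X_pow, hvne]
    · simp
  have degP : P.natDegree ≤ p - 1 := by
    apply natDegree_sum_le_of_forall_le
    intro j _
    apply le_trans (natDegree_C_mul_le _ _)
    rw [natDegree_X_pow]
    have := ZMod.val_lt j
    omega
  have aevalP : aeval ω P = 0 := by
    rw [hP, map_sum, ← hz]
    refine Finset.sum_congr rfl fun j _ => ?_
    rw [map_mul, aeval_C, map_pow, aeval_X]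
    norm_num
  have hdvd : cyclotomic p ℚ ∣ P := by
    rw [cyclotomic_eq_minpoly_rat hω hp.pos]
    exact minpoly.dvd ℚ ω aevalP
  obtain ⟨q, hq⟩ := hdvd
  have hcyc_ne : cyclotomic p ℚ ≠ 0 := cyclotomic_ne_zero p ℚ
  have hdegcyc : (cyclotomic p ℚ).natDegree = p - 1 := by
    rw [natDegree_cyclotomic, Nat.totient_prime hp]
  by_cases hq0 : q = 0
  · exfalso
    have hP0 : P = 0 := by rw [hq, hq0, mul_zero]
    have hm0 : ∀ j : ZMod p, m j = 0 := by
      intro j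
      have h2 := coeffP j
      rw [hP0, coeff_zero] at h2
      exact_mod_cast h2.symm
    rw [Finset.sum_congr rfl (fun j _ => hm0 j)] at hsum
    simp at hsum
    exact hp.ne_zero hsum.symm
  · have hdegq : q.natDegree = 0 := by
      have h3 := natDegree_mul hcyc_ne hq0
      rw [← hq, hdegcyc] at h3
      omega
    obtain ⟨c, rfl⟩ := natDegree_eq_zero.1 hdegq
    have hcoeffcyc : ∀ k, k < p → (cyclotomic p ℚ).coeff k = 1 := by
      intro k hk
      haveI : Fact p.Prime := ⟨hp⟩
      rw [cyclotomic_prime ℚ p, finset_sum_coeff]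
      rw [Finset.sum_eq_single k]
      · simp
      · intro i _ hne; simp [coeff_X_pow, Ne.symm hne]
      · intro h; exact absurd (Finset.mem_range.2 hk) h
    have hmc : ∀ j : ZMod p, (m j : ℚ) = c := by
      intro j
      rw [← coeffP j, hq, coeff_mul_C, hcoeffcyc _ (ZMod.val_lt j), one_mul]
    have hall : ∀ j j' : ZMod p, m j = m j' := by
      intro j j'
      have := (hmc j).trans (hmc j').symm
      exact_mod_cast this
    have hsum2 : p * m 0 = p := by
      have h4 : ∑ j : ZMod p, m j = p * m 0 := by
        rw [Finset.sum_congr rfl (fun j _ => hall j 0), Finset.sum_const]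
        simp [ZMod.card]
      rw [← h4, hsum]
    intro j
    rw [hall j 0]
    exact Nat.eq_of_mul_eq_mul_left hp.pos (hsum2.trans (mul_one p).symm)

/-! ### Character sums -/

section Chars
variable {p : ℕ} {ω : ℂ} (hω : IsPrimitiveRoot ω p)
include hω

lemma chpow (m : ℕ) : ω ^ (m % p) = ω ^ m := by
  conv_rhs => rw [← Nat.div_add_mod m p]
  rw [pow_add, pow_mul, hω.pow_eq_one, one_pow, one_mul]

lemma chi_add [NeZero p] (j k : ZMod p) :
    ω ^ (j + k).val = ω ^ j.val * ω ^ k.val := by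
  rw [ZMod.val_add, chpow hω, pow_add]

lemma chi_sum [NeZero p] (hp1 : 1 < p) : ∑ j : ZMod p, ω ^ j.val = 0 := by
  rw [← hω.geom_sum_eq_zero hp1]
  refine (Finset.sum_bij (fun (i : ℕ) (_ : i ∈ Finset.range p) => (i : ZMod p))
    (fun i _ => Finset.mem_univ _) ?_ ?_ ?_).symm
  · intro a ha b hb hab
    have := congrArg ZMod.val hab
    rwa [ZMod.val_cast_of_lt (Finset.mem_range.1 ha),
      ZMod.val_cast_of_lt (Finset.mem_range.1 hb)] at this
  · intro j _
    exact ⟨j.val, Finset.mem_range.2 (ZMod.val_lt j), by simp [ZMod.natCast_val, ZMod.cast_id]⟩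
  · intro i hi
    rw [ZMod.val_cast_of_lt (Finset.mem_range.1 hi)]

lemma chi_finsum [NeZero p] {ι : Type*} (s : Finset ι) (f : ι → ZMod p) :
    ω ^ (∑ i ∈ s, f i).val = ∏ i ∈ s, ω ^ (f i).val := by
  induction s using Finset.cons_induction with
  | empty => simp [ZMod.val_zero]
  | cons a s ha ih => rw [Finset.sum_cons, Finset.prod_cons, chi_add hω, ih]

lemma chi_mul_sum [NeZero p] (hp : p.Prime) (hp1 : 1 < p) (u : ZMod p) :
    (∑ c : ZMod p, ω ^ (u * c).val) = if u = 0 then (p : ℂ) else 0 := by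
  haveI : Fact p.Prime := ⟨hp⟩
  split_ifs with h
  · subst h; simp [ZMod.val_zero, ZMod.card]
  · rw [← chi_sum hω hp1]
    refine Fintype.sum_equiv (Equiv.mulLeft₀ u h) _ _ (fun c => rfl)

lemma chi_full_sum [NeZero p] (hp : p.Prime) (hp1 : 1 < p) {n : ℕ} (w : Fin n → ZMod p) :
    (∑ v : Fin n → ZMod p, ω ^ (∑ i, w i * v i).val)
      = if w = 0 then ((p : ℂ)) ^ n else 0 := by
  classical
  have h1 : ∀ v : Fin n → ZMod p, ω ^ (∑ i, w i * v i).val = ∏ i, ω ^ ((w i) * (v i)).val :=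
    fun v => chi_finsum hω _ _
  rw [Finset.sum_congr rfl (fun v _ => h1 v)]
  rw [show (∑ v : Fin n → ZMod p, ∏ i, ω ^ (w i * v i).val)
      = ∏ i, ∑ c : ZMod p, ω ^ (w i * c).val from
    (Fintype.prod_sum (fun i c => ω ^ (w i * c).val)).symm]
  have h2 : ∀ i : Fin n, (∑ c : ZMod p, ω ^ (w i * c).val) = if w i = 0 then (p:ℂ) else 0 :=
    fun i => chi_mul_sum hω hp hp1 (w i)
  rw [Finset.prod_congr rfl (fun i _ => h2 i)]
  split_ifs with h
  · subst h
    simp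
  · obtain ⟨i, hi⟩ : ∃ i, w i ≠ 0 := by
      by_contra hc
      push_neg at hc
      exact h (funext hc)
    exact Finset.prod_eq_zero (Finset.mem_univ i) (if_neg hi)

end Chars

/-! ### The finite tiling step -/

set_option maxHeartbeats 1000000 in
lemma finite_step {n p : ℕ} (hn : 0 < n) (hp : p.Prime)
    (A B : Finset (Fin n → ZMod p)) (hA : A.card = p)
    (htile : ∀ y : Fin n → ZMod p, ∃! a, a ∈ A ∧ y - a ∈ B) :
    ∃ v : Fin n → ZMod p, Set.InjOn (fun y : Fin n → ZMod p => ∑ i, v i * y i) A := by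
  classical
  haveI : Fact p.Prime := ⟨hp⟩
  haveI : NeZero p := ⟨hp.ne_zero⟩
  -- transport sums along the tiling bijection
  have hbij : ∀ f : (Fin n → ZMod p) → ℂ,
      ∑ y : Fin n → ZMod p, f y = ∑ ab ∈ A ×ˢ B, f (ab.1 + ab.2) := by
    intro f
    refine (Finset.sum_bij (fun ab (_ : ab ∈ A ×ˢ B) => ab.1 + ab.2)
      (fun _ _ => Finset.mem_univ _) ?_ ?_ (fun _ _ => rfl)).symm
    · rintro ⟨a, b⟩ hab ⟨a', b'⟩ hab' heq
      have heq' : a + b = a' + b' := heq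
      rw [Finset.mem_product] at hab hab'
      have e1 : a = a' := by
        obtain ⟨a₀, _, huniq⟩ := htile (a + b)
        have h2 : a = a₀ := huniq a ⟨hab.1, by simpa using hab.2⟩
        have h3 : a' = a₀ := huniq a' ⟨hab'.1, by rw [heq']; simpa using hab'.2⟩
        rw [h2, h3]
      have e2 : b = b' := by rw [e1] at heq'; exact add_left_cancel heq'
      rw [Prod.ext_iff]; exact ⟨e1, e2⟩
    · intro y _
      obtain ⟨a, ⟨haA, haB⟩, _⟩ := htile y
      refine ⟨(a, y - a), Finset.mem_product.2 ⟨haA, haB⟩, ?_⟩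
      show a + (y - a) = y
      abel
  -- counting
  have hB : B.card = p ^ (n - 1) := by
    have h1 := hbij (fun _ => (1 : ℂ))
    rw [Finset.sum_const, Finset.sum_const, Finset.card_univ, Finset.card_product,
      Fintype.card_fun, ZMod.card] at h1
    have h2 : (p : ℂ) ^ n = ((A.card * B.card : ℕ) : ℂ) := by
      push_cast
      simpa using h1
    have h3 : p ^ n = A.card * B.card := by exact_mod_cast h2
    rw [hA] at h3
    have hpn : p ^ n = p * p ^ (n - 1) := by
      conv_lhs => rw [show n = 1 + (n - 1) by omega]
      rw [pow_add, pow_one]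
    exact (Nat.eq_of_mul_eq_mul_left hp.pos (hpn.symm.trans h3)).symm
  set ω : ℂ := Complex.exp (2 * Real.pi * Complex.I / p) with hωdef
  have hω : IsPrimitiveRoot ω p := Complex.isPrimitiveRoot_exp p hp.ne_zero
  by_contra hcon
  push_neg at hcon
  -- every character sum over A is nonzero
  have hS0 : ∀ v : Fin n → ZMod p, (∑ a ∈ A, ω ^ (∑ i, v i * a i).val) ≠ 0 := by
    intro v hv
    set F : ZMod p → ℕ := fun j => (A.filter (fun a => (∑ i, v i * a i) = j)).card with hF
    have hmsum : ∑ j : ZMod p, (A.filter (fun a => (∑ i, v i * a i) = j)).card = p := by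
      conv_rhs => rw [← hA]
      exact (Finset.card_eq_sum_card_fiberwise (fun a _ => Finset.mem_univ
        (∑ i, v i * a i))).symm
    have hfib : (∑ a ∈ A, ω ^ (∑ i, v i * a i).val)
        = ∑ j : ZMod p, ((A.filter (fun a => (∑ i, v i * a i) = j)).card : ℂ) * ω ^ j.val := by
      have hfib0 := Finset.sum_fiberwise_of_maps_to (s := A)
        (t := (Finset.univ : Finset (ZMod p))) (g := fun a => ∑ i, v i * a i)
        (fun a _ => Finset.mem_univ _) (fun a => ω ^ (∑ i, v i * a i).val)
      rw [← hfib0]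
      refine Finset.sum_congr rfl fun j _ => ?_
      calc (∑ a ∈ A.filter (fun a => (∑ i, v i * a i) = j), ω ^ (∑ i, v i * a i).val)
          = ∑ _a ∈ A.filter (fun a => (∑ i, v i * a i) = j), ω ^ j.val :=
            Finset.sum_congr rfl (fun a ha => by rw [(Finset.mem_filter.1 ha).2])
        _ = ((A.filter (fun a => (∑ i, v i * a i) = j)).card : ℂ) * ω ^ j.val := by
            rw [Finset.sum_const, nsmul_eq_mul]
    have hmsum' : ∑ j : ZMod p, F j = p := hmsum
    have hz : ∑ j : ZMod p, (F j : ℂ) * ω ^ (ZMod.val j) = 0 := by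
      rw [hF]
      simp only []
      rw [← hfib]
      exact hv
    have hm1 := rig hp hω F hmsum' hz
    apply hcon v
    intro a ha a' ha' heq
    simp only [Finset.mem_coe] at ha ha'
    have heq2 : (∑ i, v i * a i) = ∑ i, v i * a' i := heq
    have hja : a ∈ A.filter (fun a => (∑ i, v i * a i) = ∑ i, v i * a' i) :=
      Finset.mem_filter.2 ⟨ha, heq2⟩
    have hja' : a' ∈ A.filter (fun a => (∑ i, v i * a i) = ∑ i, v i * a' i) :=
      Finset.mem_filter.2 ⟨ha', rfl⟩
    exact Finset.card_le_one.1 (le_of_eq (hm1 _)) a hja a' hja'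
  -- for v ≠ 0, the B-sum vanishes
  have hTB : ∀ v : Fin n → ZMod p, v ≠ 0 → (∑ b ∈ B, ω ^ (∑ i, v i * b i).val) = 0 := by
    intro v hv
    have hsplit : (∑ a ∈ A, ω ^ (∑ i, v i * a i).val) * (∑ b ∈ B, ω ^ (∑ i, v i * b i).val)
        = ∑ y : Fin n → ZMod p, ω ^ (∑ i, v i * y i).val := by
      rw [Finset.sum_mul_sum, hbij (fun y => ω ^ (∑ i, v i * y i).val), Finset.sum_product]
      refine Finset.sum_congr rfl fun a _ => Finset.sum_congr rfl fun b _ => ?_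
      rw [show (∑ i, v i * (a + b) i) = (∑ i, v i * a i) + ∑ i, v i * b i by
        rw [← Finset.sum_add_distrib]
        exact Finset.sum_congr rfl fun i _ => by
          show v i * (a i + b i) = _
          ring]
      exact (chi_add hω _ _).symm
    have h1 : (∑ y : Fin n → ZMod p, ω ^ (∑ i, v i * y i).val) = 0 := by
      rw [chi_full_sum hω hp hp.one_lt v, if_neg hv]
    rw [h1] at hsplit
    rcases mul_eq_zero.1 hsplit with h | h
    · exact absurd h (hS0 v)
    · exact h
  -- double counting
  have hQ1 : (∑ v : Fin n → ZMod p, ∑ b ∈ B, ω ^ (∑ i, v i * b i).val)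
      = (p : ℂ) ^ (n - 1) := by
    rw [Finset.sum_eq_single_of_mem 0 (Finset.mem_univ 0) (fun v _ hv => hTB v hv)]
    have h2 : ∀ b ∈ B, (ω:ℂ) ^ (∑ i, (0 : Fin n → ZMod p) i * b i).val = 1 := by
      intro b _
      rw [show (∑ i, (0 : Fin n → ZMod p) i * b i) = 0 by simp]
      simp [ZMod.val_zero]
    rw [Finset.sum_congr rfl h2, Finset.sum_const, hB]
    simp
  have hQ2 : (∑ v : Fin n → ZMod p, ∑ b ∈ B, ω ^ (∑ i, v i * b i).val)
      = if (0 : Fin n → ZMod p) ∈ B then (p:ℂ) ^ n else 0 := by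
    rw [Finset.sum_comm]
    have hinner : ∀ b ∈ B, (∑ v : Fin n → ZMod p, ω ^ (∑ i, v i * b i).val)
        = if b = 0 then (p:ℂ)^n else 0 := by
      intro b _
      rw [show (∑ v : Fin n → ZMod p, ω ^ (∑ i, v i * b i).val)
          = ∑ v : Fin n → ZMod p, ω ^ (∑ i, b i * v i).val from
        Finset.sum_congr rfl fun v _ => by rw [Finset.sum_congr rfl
          (fun i _ => mul_comm (v i) (b i))]]
      exact chi_full_sum hω hp hp.one_lt b
    rw [Finset.sum_congr rfl hinner, Finset.sum_ite_eq' B (0 : Fin n → ZMod p)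
      (fun _ => (p:ℂ)^n)]
  rw [hQ1] at hQ2
  have hppos : (p:ℂ) ≠ 0 := by exact_mod_cast hp.ne_zero
  split_ifs at hQ2 with h
  · have h2 : p ^ (n-1) = p ^ n := by exact_mod_cast hQ2
    have := Nat.pow_right_injective hp.two_le h2
    omega
  · exact pow_ne_zero _ hppos hQ2

/-! ### Main theorem -/

set_option maxHeartbeats 1000000 in
/-- If the cardinality of the Lee sphere `S(n,r)` is a prime `p`, then there exists a
`PL(n,r)`-code if and only if there exists a homomorphism `φ : ℤ^n → C_p` whose
restriction to `S(n,r)` is a bijection onto the cyclic group `C_p`. -/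
theorem PL_iff_hom_of_prime (n r p : ℕ) (hn : 0 < n) (hr : 0 < r) (hp : p.Prime)
    (hcard : (LeeSphere n r).ncard = p) :
    (∃ C : Set (Fin n → ℤ), IsPLCode n r C) ↔
    (∃ φ : (Fin n → ℤ) →+ ZMod p, Set.BijOn φ (LeeSphere n r) Set.univ) := by
  constructor
  · rintro ⟨C, hC⟩
    classical
    haveI : Fact p.Prime := ⟨hp⟩
    haveI : NeZero p := ⟨hp.ne_zero⟩
    have htile0 := (isPLCode_iff C).1 hC
    have hper := periodicity C hr htile0 hcard
    set S : Finset (Fin n → ℤ) := (leeSphere_finite n r).toFinset with hSdef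
    have hmemS : ∀ t, t ∈ S ↔ t ∈ LeeSphere n r := fun t => Set.Finite.mem_toFinset _
    have hScard : S.card = p := by
      rw [← hcard, Set.ncard_eq_toFinset_card _ (leeSphere_finite n r)]
    have h2r : 2 * r + 1 ≤ p := hcard ▸ leeSphere_card_lower hn hr
    -- the reduction homomorphism
    set π : (Fin n → ℤ) →+ (Fin n → ZMod p) :=
      { toFun := fun x i => ((x i : ℤ) : ZMod p)
        map_zero' := by funext i; simp
        map_add' := by intro a b; funext i; simp } with hπdef
    have hπapply : ∀ (x : Fin n → ℤ) (i : Fin n), π x i = ((x i : ℤ) : ZMod p) :=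
      fun x i => rfl
    -- injectivity of π on the sphere
    have hπinj : ∀ s ∈ LeeSphere n r, ∀ s' ∈ LeeSphere n r, π s = π s' → s = s' := by
      intro s hs s' hs' h
      funext i
      have h1 : ((s i : ℤ) : ZMod p) = ((s' i : ℤ) : ZMod p) := by
        have := congrFun h i
        rwa [hπapply, hπapply] at this
      rw [ZMod.intCast_eq_intCast_iff] at h1
      have hdvd : (p:ℤ) ∣ s i - s' i := h1.symm.dvd
      have habs : |s i - s' i| < (p:ℤ) := by
        have b1 := abs_coord_le hs i
        have b2 := abs_coord_le hs' i
        have := abs_sub (s i) (s' i)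
        have h2r' : (2*r+1 : ℤ) ≤ p := by exact_mod_cast h2r
        calc |s i - s' i| ≤ |s i| + |s' i| := abs_sub _ _
          _ ≤ (r:ℤ) + r := add_le_add b1 b2
          _ < p := by omega
      have := Int.eq_zero_of_abs_lt_dvd hdvd habs
      omega
    -- image of the sphere and of the code
    set A' : Finset (Fin n → ZMod p) := S.image (fun t => π t) with hA'def
    have hA'card : A'.card = p := by
      rw [hA'def, Finset.card_image_of_injOn, hScard]
      intro s hs s' hs' h
      exact hπinj s ((hmemS _).1 hs) s' ((hmemS _).1 hs') h
    set B : Finset (Fin n → ZMod p) :=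
      (Set.toFinite ((fun x => π x) '' C)).toFinset with hBdef
    have hmemB : ∀ y, y ∈ B ↔ ∃ c ∈ C, π c = y := by
      intro y
      rw [hBdef, Set.Finite.mem_toFinset]
      exact Set.mem_image _ _ _
    -- kernel of π
    have hker : ∀ v : Fin n → ℤ, π v = 0 → ∃ z, v = (p:ℕ) • z := by
      intro v hv
      refine ⟨fun i => v i / p, ?_⟩
      funext i
      have h1 : ((v i : ℤ) : ZMod p) = 0 := by
        have := congrFun hv i
        rwa [hπapply] at this
      have hdvd : (p:ℤ) ∣ v i := (ZMod.intCast_zmod_eq_zero_iff_dvd _ _).1 h1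
      show v i = (p:ℕ) • (v i / p)
      rw [nsmul_eq_mul]
      push_cast
      rw [Int.mul_ediv_cancel' hdvd]
    -- the induced tiling of 𝔽_p^n
    have htile' : ∀ y : Fin n → ZMod p, ∃! a, a ∈ A' ∧ y - a ∈ B := by
      intro y
      set x : Fin n → ℤ := fun i => ((y i).val : ℤ) with hxdef
      have hx : π x = y := by
        funext i
        rw [hπapply]
        show (((y i).val : ℤ) : ZMod p) = y i
        push_cast
        simp [ZMod.natCast_val, ZMod.cast_id]
      obtain ⟨c, ⟨hcC, hcs⟩, huniq⟩ := htile0 x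
      refine ⟨π (x - c), ⟨Finset.mem_image_of_mem _ ((hmemS _).2 hcs), ?_⟩, ?_⟩
      · rw [(hmemB _)]
        exact ⟨c, hcC, by rw [map_sub, hx]; abel⟩
      · rintro a₁ ⟨ha₁A, ha₁B⟩
        obtain ⟨t₁, ht₁S, ht₁⟩ := Finset.mem_image.1 ha₁A
        obtain ⟨c₁, hc₁C, hc₁⟩ := (hmemB _).1 ha₁B
        have hπ0 : π (x - t₁ - c₁) = 0 := by
          rw [map_sub, map_sub, hx, ht₁, hc₁]
          abel
        obtain ⟨z, hz⟩ := hker _ hπ0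
        have hc₂C : c₁ + (p:ℕ) • z ∈ C := hper c₁ hc₁C z
        have hxc₂ : x - (c₁ + (p:ℕ) • z) = t₁ := by
          rw [← hz]
          abel
        have hc₂s : x - (c₁ + (p:ℕ) • z) ∈ LeeSphere n r := by
          rw [hxc₂]
          exact (hmemS _).1 ht₁S
        have := huniq (c₁ + (p:ℕ) • z) ⟨hc₂C, hc₂s⟩
        rw [← ht₁, show t₁ = x - c from by rw [← this, ← hxc₂]]
    -- the finite step gives a linear functional
    obtain ⟨v, hv⟩ := finite_step hn hp A' B hA'card htile'
    -- assemble the homomorphism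
    refine ⟨{ toFun := fun x => ∑ i, v i * ((x i : ℤ) : ZMod p)
              map_zero' := by simp
              map_add' := by
                intro a b
                show (∑ i, v i * (((a + b) i : ℤ) : ZMod p))
                  = (∑ i, v i * ((a i : ℤ) : ZMod p)) + ∑ i, v i * ((b i : ℤ) : ZMod p)
                rw [← Finset.sum_add_distrib]
                refine Finset.sum_congr rfl fun i _ => ?_
                show v i * (((a i + b i : ℤ)) : ZMod p) = _
                push_cast
                ring }, ?_, ?_, ?_⟩
    · intro s _
      exact Set.mem_univ _
    · intro s hs s' hs' h
      have hπs : π s ∈ (A' : Set (Fin n → ZMod p)) :=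
        Finset.mem_coe.2 (Finset.mem_image_of_mem _ ((hmemS _).2 hs))
      have hπs' : π s' ∈ (A' : Set (Fin n → ZMod p)) :=
        Finset.mem_coe.2 (Finset.mem_image_of_mem _ ((hmemS _).2 hs'))
      have heq : (∑ i, v i * (π s) i) = ∑ i, v i * (π s') i := h
      exact hπinj s hs s' hs' (hv hπs hπs' heq)
    · -- surjectivity
      intro y _
      have hinj2 : Set.InjOn (fun s : Fin n → ℤ => ∑ i, v i * ((s i : ℤ) : ZMod p)) ↑S := by
        intro s hs s' hs' h
        have hsS := (hmemS s).1 (Finset.mem_coe.1 hs)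
        have hs'S := (hmemS s').1 (Finset.mem_coe.1 hs')
        have hπs : π s ∈ (A' : Set (Fin n → ZMod p)) :=
          Finset.mem_coe.2 (Finset.mem_image_of_mem _ ((hmemS _).2 hsS))
        have hπs' : π s' ∈ (A' : Set (Fin n → ZMod p)) :=
          Finset.mem_coe.2 (Finset.mem_image_of_mem _ ((hmemS _).2 hs'S))
        exact hπinj s hsS s' hs'S (hv hπs hπs' h)
      have hicard : (S.image (fun s => ∑ i, v i * ((s i : ℤ) : ZMod p))).card = p := by
        rw [Finset.card_image_of_injOn hinj2, hScard]
      have huniv : S.image (fun s => ∑ i, v i * ((s i : ℤ) : ZMod p)) = Finset.univ := by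
        apply Finset.eq_univ_of_card
        rw [hicard, ZMod.card]
      have : y ∈ S.image (fun s => ∑ i, v i * ((s i : ℤ) : ZMod p)) := by
        rw [huniv]; exact Finset.mem_univ y
      obtain ⟨s, hsS, hsy⟩ := Finset.mem_image.1 this
      exact ⟨s, (hmemS _).1 hsS, hsy⟩
  · rintro ⟨φ, hφ⟩
    exact hom_to_code φ hφ
end

section
/- Let n and r be positive integers. There exists a linear PL(n,r)-code if and only if there exist a finite abelian group G of order |S(n,r)| = Σ_{i=0}^{min(n,r)} 2^i · C(n,i) · C(r,i) and a subset D ⊆ G with D = D^{-1}, 1 ∉ D and |D| = 2n, such that the Cayley graph Γ(G,D) has diameter r. -/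
/-- `C` is a linear `PL(n,r)`-code. -/
def IsLinearPLCode (n r : ℕ) (C : AddSubgroup (Fin n → ℤ)) : Prop :=
  ∀ x : Fin n → ℤ, ∃! c, c ∈ C ∧ (∑ i, |x i - c i|) ≤ (r : ℤ)

/-- The Cayley graph of a group `G` with respect to a connection set `D`. -/
def cayleyGraph (G : Type) [Group G] (D : Set G) : SimpleGraph G :=
  SimpleGraph.fromRel (fun g h => g⁻¹ * h ∈ D)

namespace PLAux
open Finset

noncomputable def ballF (n r : ℕ) : Finset (Fin n → ℤ) :=
  (Fintype.piFinset fun _ => Finset.Icc (-(r:ℤ)) (r:ℤ)).filter (fun x => ∑ i, |x i| ≤ (r:ℤ))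

lemma mem_ballF {n r : ℕ} {x : Fin n → ℤ} : x ∈ ballF n r ↔ ∑ i, |x i| ≤ (r:ℤ) := by
  constructor
  · intro h; exact (Finset.mem_filter.mp h).2
  · intro h
    refine Finset.mem_filter.mpr ⟨Fintype.mem_piFinset.mpr fun i => ?_, h⟩
    have h1 : |x i| ≤ (r:ℤ) :=
      le_trans (Finset.single_le_sum (f := fun j => |x j|) (fun j _ => abs_nonneg _)
        (Finset.mem_univ i)) h
    rw [Finset.mem_Icc]; exact abs_le.mp h1

lemma ball_succ (n m : ℕ) :
    ballF (n+1) m = (Finset.Icc (-(m:ℤ)) (m:ℤ)).biUnion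
      (fun a => (ballF n (m - a.natAbs)).image (fun x => Fin.cons a x)) := by
  ext y
  simp only [Finset.mem_biUnion, Finset.mem_image, Finset.mem_Icc, mem_ballF]
  constructor
  · intro hy
    have hsum : |y 0| + ∑ i : Fin n, |y i.succ| ≤ (m:ℤ) := by
      rw [← Fin.sum_univ_succ (f := fun i => |y i|)]; exact hy
    have h0 : |y 0| ≤ (m:ℤ) := by
      have : (0:ℤ) ≤ ∑ i : Fin n, |y i.succ| := Finset.sum_nonneg fun i _ => abs_nonneg _
      omega
    have hna : (y 0).natAbs ≤ m := by
      rw [Int.abs_eq_natAbs] at h0; exact_mod_cast h0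
    refine ⟨y 0, ⟨(abs_le.mp h0).1, (abs_le.mp h0).2⟩,
      Fin.tail y, ?_, Fin.cons_self_tail y⟩
    have : ((m - (y 0).natAbs : ℕ) : ℤ) = (m:ℤ) - |y 0| := by
      rw [Nat.cast_sub hna, Int.abs_eq_natAbs]
    rw [this]
    have : ∑ i : Fin n, |Fin.tail y i| = ∑ i : Fin n, |y i.succ| := by
      apply Finset.sum_congr rfl; intro i _; rfl
    omega
  · rintro ⟨a, ⟨ha1, ha2⟩, x, hx, rfl⟩
    have hna : a.natAbs ≤ m := by omega
    have hc : ((m - a.natAbs : ℕ) : ℤ) = (m:ℤ) - |a| := by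
      rw [Nat.cast_sub hna, Int.abs_eq_natAbs]
    rw [hc] at hx
    rw [Fin.sum_univ_succ (f := fun i => |Fin.cons a x i|)]
    simp only [Fin.cons_zero, Fin.cons_succ]
    omega

lemma card_ball_succ (n m : ℕ) :
    (ballF (n+1) m).card = ∑ a ∈ Finset.Icc (-(m:ℤ)) (m:ℤ), (ballF n (m - a.natAbs)).card := by
  rw [ball_succ, Finset.card_biUnion]
  · apply Finset.sum_congr rfl
    intro a _
    exact Finset.card_image_of_injective _ (fun x x' h => Fin.cons_right_injective a (α := fun _ => ℤ) h)
  · intro a _ b _ hab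
    apply Finset.disjoint_left.mpr
    rintro y hy hy'
    simp only [Finset.mem_image] at hy hy'
    obtain ⟨x, _, rfl⟩ := hy
    obtain ⟨x', _, h⟩ := hy'
    apply hab
    have := congrFun h 0
    simpa using this.symm


lemma sum_Icc_split (F : ℕ → ℕ) (m : ℕ) :
    ∑ a ∈ Finset.Icc (-(m:ℤ)) (m:ℤ), F (m - a.natAbs)
      = ∑ k ∈ Finset.range m, F k + ∑ k ∈ Finset.range (m+1), F k := by
  have hsplit : Finset.Icc (-(m:ℤ)) (m:ℤ)
      = Finset.Icc (-(m:ℤ)) (-1) ∪ Finset.Icc (0:ℤ) (m:ℤ) := by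
    ext a; simp only [Finset.mem_Icc, Finset.mem_union]; omega
  rw [hsplit, Finset.sum_union (by
    apply Finset.disjoint_left.mpr; intro a h1 h2
    simp only [Finset.mem_Icc] at h1 h2; omega)]
  congr 1
  · apply Finset.sum_nbij' (i := fun (a:ℤ) => m - a.natAbs) (j := fun (k:ℕ) => (k:ℤ) - m)
    · intro a ha; simp only [Finset.mem_Icc] at ha; simp only [Finset.mem_range]; omega
    · intro k hk; simp only [Finset.mem_range] at hk; simp only [Finset.mem_Icc]; omega
    · intro a ha; simp only [Finset.mem_Icc] at ha; omega
    · intro k hk; simp only [Finset.mem_range] at hk; omega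
    · intro a ha; rfl
  · apply Finset.sum_nbij' (i := fun (a:ℤ) => m - a.natAbs) (j := fun (k:ℕ) => ((m - k : ℕ):ℤ))
    · intro a ha; simp only [Finset.mem_Icc] at ha; simp only [Finset.mem_range]; omega
    · intro k hk; simp only [Finset.mem_range] at hk; simp only [Finset.mem_Icc]; omega
    · intro a ha; simp only [Finset.mem_Icc] at ha; omega
    · intro k hk; simp only [Finset.mem_range] at hk; omega
    · intro a ha; rfl


def dSum (n r : ℕ) : ℕ := ∑ i ∈ Finset.range (n+1), 2 ^ i * n.choose i * r.choose i

lemma dSum_zero (r : ℕ) : dSum 0 r = 1 := by simp [dSum]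

lemma dSum_r_zero (n : ℕ) : dSum n 0 = 1 := by
  rw [dSum, Finset.sum_eq_single 0]
  · simp
  · intro i _ hi
    rw [Nat.choose_eq_zero_of_lt (n:=0) (by omega)]; ring
  · intro h; exact absurd (Finset.mem_range.mpr (by omega)) h

lemma dSum_ext (n r : ℕ) : ∑ i ∈ Finset.range (n+2), 2 ^ i * n.choose i * r.choose i = dSum n r := by
  rw [Finset.sum_range_succ, Nat.choose_eq_zero_of_lt (n:=n) (by omega), dSum]; simp [Nat.add_comm]

lemma dSum_rec (n r : ℕ) :
    dSum (n+1) (r+1) + dSum n r = dSum (n+1) r + dSum n (r+1) + 2 * dSum n r := by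
  have key : ∀ i, 2 ^ (i+1) * (n+1).choose (i+1) * (r+1).choose (i+1)
      + 2 ^ (i+1) * n.choose (i+1) * r.choose (i+1)
      = 2 ^ (i+1) * (n+1).choose (i+1) * r.choose (i+1)
      + 2 ^ (i+1) * n.choose (i+1) * (r+1).choose (i+1)
      + 2 * (2 ^ i * n.choose i * r.choose i) := by
    intro i
    rw [Nat.choose_succ_succ n i, Nat.choose_succ_succ r i]
    ring
  -- expand all sums over range (n+2) then shift
  have e1 : dSum (n+1) (r+1) = ∑ i ∈ Finset.range (n+1), 2 ^ (i+1) * (n+1).choose (i+1) * (r+1).choose (i+1) + 1 := by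
    rw [dSum, Finset.sum_range_succ']; simp
  have e2 : dSum (n+1) r = ∑ i ∈ Finset.range (n+1), 2 ^ (i+1) * (n+1).choose (i+1) * r.choose (i+1) + 1 := by
    rw [dSum, Finset.sum_range_succ']; simp
  have e3 : dSum n (r+1) = ∑ i ∈ Finset.range (n+1), 2 ^ (i+1) * n.choose (i+1) * (r+1).choose (i+1) + 1 := by
    rw [← dSum_ext, Finset.sum_range_succ']; simp
  have e4 : dSum n r = ∑ i ∈ Finset.range (n+1), 2 ^ (i+1) * n.choose (i+1) * r.choose (i+1) + 1 := by
    rw [← dSum_ext, Finset.sum_range_succ']; simp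
  have e5 : dSum n r = ∑ i ∈ Finset.range (n+1), 2 ^ i * n.choose i * r.choose i := by
    rw [dSum]
  conv_lhs => rw [e1, e4]
  conv_rhs => rw [e2, e3, e5]
  have := Finset.sum_congr rfl (fun i (_ : i ∈ Finset.range (n+1)) => key i)
  rw [Finset.sum_add_distrib] at this
  simp only [Finset.sum_add_distrib] at this
  rw [Finset.mul_sum]
  omega

lemma ballF_zero (m : ℕ) : (ballF 0 m).card = 1 := by
  rw [Finset.card_eq_one]
  refine ⟨(fun i => i.elim0), ?_⟩
  ext y
  simp only [Finset.mem_singleton, mem_ballF]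
  constructor
  · intro _; funext i; exact i.elim0
  · intro h; simp [h]

lemma ballF_r_zero (n : ℕ) : (ballF n 0).card = 1 := by
  rw [Finset.card_eq_one]
  refine ⟨0, ?_⟩
  ext y
  simp only [Finset.mem_singleton, mem_ballF, Nat.cast_zero]
  constructor
  · intro h
    funext i
    have h0 : ∀ j ∈ Finset.univ, (0:ℤ) ≤ |y j| := fun j _ => abs_nonneg _
    have := (Finset.sum_eq_zero_iff_of_nonneg h0).mp (le_antisymm h (Finset.sum_nonneg h0))
    have := this i (Finset.mem_univ i)
    simpa [abs_eq_zero] using this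
  · intro h; simp [h]

lemma card_ball_rec (n m : ℕ) :
    (ballF (n+1) (m+1)).card
      = (ballF (n+1) m).card + (ballF n (m+1)).card + (ballF n m).card := by
  have h1 := card_ball_succ n (m+1)
  have h2 := card_ball_succ n m
  rw [sum_Icc_split (fun k => (ballF n k).card)] at h1 h2
  rw [h1, h2, Finset.sum_range_succ (fun k => (ballF n k).card) (m+1),
    Finset.sum_range_succ (fun k => (ballF n k).card) m]
  omega

lemma card_ballF (n r : ℕ) : (ballF n r).card = dSum n r := by
  induction n generalizing r with
  | zero => rw [ballF_zero, dSum_zero]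
  | succ n ih =>
    induction r with
    | zero => rw [ballF_r_zero, dSum_r_zero]
    | succ r ihr =>
      have := dSum_rec n r
      rw [card_ball_rec, ihr, ih (r+1), ih r]
      omega

lemma card_ballF_min (n r : ℕ) :
    (ballF n r).card = ∑ i ∈ Finset.range (min n r + 1), 2 ^ i * n.choose i * r.choose i := by
  rw [card_ballF, dSum]
  apply (Finset.sum_subset ?_ ?_).symm
  · intro i hi
    simp only [Finset.mem_range] at hi ⊢
    omega
  · intro i hi hni
    simp only [Finset.mem_range] at hi hni
    have : r < i := by omega
    rw [Nat.choose_eq_zero_of_lt this, Nat.mul_zero]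

variable {G : Type} [Group G] {D : Set G}

lemma cayley_adj (hD : D⁻¹ = D) {g h : G} :
    (cayleyGraph G D).Adj g h ↔ g ≠ h ∧ g⁻¹ * h ∈ D := by
  unfold cayleyGraph
  rw [SimpleGraph.fromRel_adj]
  constructor
  · rintro ⟨hne, hor⟩
    refine ⟨hne, ?_⟩
    rcases hor with h1 | h1
    · exact h1
    · rw [← hD]
      simpa using h1
  · rintro ⟨hne, hmem⟩
    exact ⟨hne, Or.inl hmem⟩

lemma walk_to_word (hD : D⁻¹ = D) {g h : G} (p : (cayleyGraph G D).Walk g h) :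
    ∃ l : List G, (∀ a ∈ l, a ∈ D) ∧ l.length = p.length ∧ g * l.prod = h := by
  induction p with
  | nil => exact ⟨[], by simp, by simp, by simp⟩
  | @cons u v w hadj p ih =>
    obtain ⟨l, hl, hlen, hprod⟩ := ih
    obtain ⟨-, hmem⟩ := (cayley_adj hD).mp hadj
    refine ⟨(u⁻¹ * v) :: l, ?_, by simp [hlen], ?_⟩
    · intro a ha
      rcases List.mem_cons.mp ha with rfl | ha
      · exact hmem
      · exact hl a ha
    · rw [List.prod_cons, ← mul_assoc, mul_inv_cancel_left, hprod]

lemma word_to_walk (hD1 : (1:G) ∉ D) (g : G) (l : List G) (hl : ∀ a ∈ l, a ∈ D) :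
    ∃ p : (cayleyGraph G D).Walk g (g * l.prod), p.length = l.length := by
  induction l generalizing g with
  | nil => exact ⟨SimpleGraph.Walk.nil.copy rfl (by simp), by rw [SimpleGraph.Walk.length_copy]; rfl⟩
  | cons a l ih =>
    have haD : a ∈ D := hl a (List.mem_cons_self)
    have hane : a ≠ 1 := fun h => hD1 (h ▸ haD)
    have hadj : (cayleyGraph G D).Adj g (g * a) := by
      unfold cayleyGraph
      rw [SimpleGraph.fromRel_adj]
      refine ⟨fun h => hane ?_, Or.inl (by simpa using haD)⟩
      · have := h.symm
        rwa [mul_eq_left] at this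
    obtain ⟨p, hp⟩ := ih (g * a) (fun b hb => hl b (List.mem_cons_of_mem a hb))
    refine ⟨(SimpleGraph.Walk.cons hadj p).copy rfl (by rw [List.prod_cons, mul_assoc]), ?_⟩
    rw [SimpleGraph.Walk.length_copy, SimpleGraph.Walk.length_cons, hp]; rfl

lemma edist_le_word (hD1 : (1:G) ∉ D) (g : G) (l : List G) (hl : ∀ a ∈ l, a ∈ D) :
    (cayleyGraph G D).edist g (g * l.prod) ≤ l.length := by
  obtain ⟨p, hp⟩ := word_to_walk hD1 g l hl
  calc (cayleyGraph G D).edist g (g * l.prod) ≤ p.length := SimpleGraph.edist_le p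
  _ = l.length := by exact_mod_cast hp


lemma norm_single {n : ℕ} (i : Fin n) (c : ℤ) : ∑ j, |Pi.single i c j| = |c| := by
  rw [Finset.sum_eq_single i]
  · simp
  · intro j _ hj; rw [Pi.single_eq_of_ne hj, abs_zero]
  · intro h; exact absurd (Finset.mem_univ i) h

lemma single_neg' {n : ℕ} (i : Fin n) :
    (Pi.single i (-1 : ℤ) : Fin n → ℤ) = -Pi.single i 1 := by
  funext j
  by_cases h : j = i
  · subst h; simp
  · simp [Pi.single_eq_of_ne h]

section Forward
variable {n r : ℕ} (C : AddSubgroup (Fin n → ℤ))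

abbrev Aq := (Fin n → ℤ) ⧸ C

lemma hsmall (hC : IsLinearPLCode n r C) {c : Fin n → ℤ} (hc : c ∈ C) (x : Fin n → ℤ)
    (h1 : (∑ i, |x i|) ≤ (r:ℤ)) (h2 : (∑ i, |x i - c i|) ≤ (r:ℤ)) : c = 0 := by
  obtain ⟨c0, _, huniq⟩ := hC x
  have e1 := huniq c ⟨hc, h2⟩
  have e2 := huniq 0 ⟨C.zero_mem, by simpa using h1⟩
  rw [e1, ← e2]

lemma hinj (hC : IsLinearPLCode n r C) {b1 b2 : Fin n → ℤ}
    (h1 : b1 ∈ ballF n r) (h2 : b2 ∈ ballF n r)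
    (h : (b1 : Aq C) = (b2 : Aq C)) : b1 = b2 := by
  rw [QuotientAddGroup.eq_iff_sub_mem] at h
  have := hsmall C hC h (x := b1) (mem_ballF.mp h1) (by
    calc (∑ i, |b1 i - (b1 - b2) i|) = ∑ i, |b2 i| := by
          apply Finset.sum_congr rfl; intro i _; congr 1; simp
    _ ≤ (r:ℤ) := mem_ballF.mp h2)
  exact sub_eq_zero.mp this

lemma hsurj (hC : IsLinearPLCode n r C) (a : Aq C) :
    ∃ b ∈ ballF n r, (b : Aq C) = a := by
  obtain ⟨x, rfl⟩ := QuotientAddGroup.mk_surjective a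
  obtain ⟨c, ⟨hc1, hc2⟩, -⟩ := hC x
  refine ⟨x - c, mem_ballF.mpr (by simpa using hc2), ?_⟩
  rw [QuotientAddGroup.eq_iff_sub_mem]
  simpa using hc1

noncomputable def ballEquiv (hC : IsLinearPLCode n r C) : ↥(ballF n r) ≃ Aq C :=
  Equiv.ofBijective (fun b => ((b : Fin n → ℤ) : Aq C))
    ⟨fun b1 b2 h => Subtype.ext (hinj C hC b1.2 b2.2 h),
     fun a => by obtain ⟨b, hb, h⟩ := hsurj C hC a; exact ⟨⟨b, hb⟩, h⟩⟩

lemma card_Aq (hC : IsLinearPLCode n r C) : Nat.card (Aq C) = (ballF n r).card := by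
  rw [← Nat.card_congr (ballEquiv C hC), Nat.card_eq_finsetCard]

def sgl {n : ℕ} (i : Fin n) : Fin n → ℤ := Pi.single i 1

lemma norm_sgl {n : ℕ} (i : Fin n) : (∑ j, |sgl i j|) = 1 := by
  rw [sgl, norm_single]; simp

lemma norm_neg' {n : ℕ} (v : Fin n → ℤ) : (∑ j, |(-v) j|) = ∑ j, |v j| := by
  apply Finset.sum_congr rfl; intro j _; simp

lemma sgl_inj {n : ℕ} {i j : Fin n} (h : sgl i = sgl j) : i = j := by
  by_contra hij
  have := congrFun h i
  rw [sgl, sgl, Pi.single_eq_same, Pi.single_eq_of_ne hij] at this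
  exact one_ne_zero this

lemma sgl_ne_neg {n : ℕ} {i j : Fin n} (h : sgl i = -sgl j) : False := by
  have := congrFun h i
  rw [sgl, sgl, Pi.single_eq_same, Pi.neg_apply] at this
  by_cases hij : i = j
  · subst hij; rw [Pi.single_eq_same] at this; omega
  · rw [Pi.single_eq_of_ne hij] at this; omega

def Fm : Fin n ⊕ Fin n → Multiplicative (Aq C) :=
  Sum.elim (fun i => Multiplicative.ofAdd ((sgl i : Fin n → ℤ) : Aq C))
           (fun i => Multiplicative.ofAdd (((-sgl i : Fin n → ℤ) : Fin n → ℤ) : Aq C))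

lemma Fm_inj (hC : IsLinearPLCode n r C) (hr : 0 < r) : Function.Injective (Fm C) := by
  have hr1 : (1:ℤ) ≤ (r:ℤ) := by exact_mod_cast hr
  have base : ∀ u v : Fin n → ℤ, (∑ i, |u i|) = 1 → (∑ i, |v i|) = 1 →
      (u : Aq C) = (v : Aq C) → u = v := by
    intro u v hu hv h
    exact hinj C hC (mem_ballF.mpr (by omega)) (mem_ballF.mpr (by omega)) h
  intro s t h
  rcases s with i | i <;> rcases t with j | j <;>
    simp only [Fm, Sum.elim_inl, Sum.elim_inr, Multiplicative.ofAdd.apply_eq_iff_eq] at h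
  · exact congrArg Sum.inl (sgl_inj (base _ _ (norm_sgl i) (norm_sgl j) h))
  · exact absurd (base _ _ (norm_sgl i) (by rw [norm_neg', norm_sgl]) h) (fun hh => sgl_ne_neg hh)
  · exact absurd (base _ _ (by rw [norm_neg', norm_sgl]) (norm_sgl j) h).symm
      (fun hh => sgl_ne_neg hh)
  · have := base _ _ (by rw [norm_neg', norm_sgl]) (by rw [norm_neg', norm_sgl]) h
    exact congrArg Sum.inr (sgl_inj (neg_injective this))

def DF : Set (Multiplicative (Aq C)) := Set.range (Fm C)

lemma Fm_inv_eq (s : Fin n ⊕ Fin n) : (Fm C s)⁻¹ = Fm C (Sum.elim Sum.inr Sum.inl s) := by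
  rcases s with i | i <;>
    simp [Fm, ← ofAdd_neg, ← QuotientAddGroup.mk_neg]

lemma hDinv : (DF C)⁻¹ = DF C := by
  ext g
  rw [Set.mem_inv]
  constructor
  · rintro ⟨s, hs⟩
    refine ⟨Sum.elim Sum.inr Sum.inl s, ?_⟩
    rw [← Fm_inv_eq, hs, inv_inv]
  · rintro ⟨s, rfl⟩
    exact ⟨Sum.elim Sum.inr Sum.inl s, (Fm_inv_eq C s).symm⟩

lemma norm_le_zero_eq_zero {v : Fin n → ℤ} (h : (∑ i, |v i|) ≤ 0) : v = 0 := by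
  funext i
  have h0 : ∀ j ∈ Finset.univ, (0:ℤ) ≤ |v j| := fun j _ => abs_nonneg _
  have := (Finset.sum_eq_zero_iff_of_nonneg h0).mp (le_antisymm h (Finset.sum_nonneg h0))
  simpa [abs_eq_zero] using this i (Finset.mem_univ i)

lemma notinC (hC : IsLinearPLCode n r C) {v : Fin n → ℤ}
    (hv : (∑ i, |v i|) ≤ (r:ℤ)) (h0 : v ≠ 0) : (v : Aq C) ≠ 0 := by
  intro h
  rw [QuotientAddGroup.eq_zero_iff] at h
  exact h0 (hsmall C hC h v hv (by simp))

lemma sgl_ne_zero {n : ℕ} (i : Fin n) : sgl i ≠ 0 := by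
  intro h
  have := congrFun h i
  rw [sgl, Pi.single_eq_same] at this
  exact one_ne_zero this

lemma h1D (hC : IsLinearPLCode n r C) (hr : 0 < r) : (1 : Multiplicative (Aq C)) ∉ DF C := by
  have hr1 : (1:ℤ) ≤ (r:ℤ) := by exact_mod_cast hr
  rintro ⟨s, hs⟩
  rcases s with i | i <;>
    simp only [Fm, Sum.elim_inl, Sum.elim_inr, ← ofAdd_zero,
      Multiplicative.ofAdd.apply_eq_iff_eq] at hs
  · exact notinC C hC (by rw [norm_sgl]; omega) (sgl_ne_zero i) hs
  · exact notinC C hC (by rw [norm_neg', norm_sgl]; omega)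
      (fun h => sgl_ne_zero i (neg_eq_zero.mp h)) hs

lemma hcardD (hC : IsLinearPLCode n r C) (hr : 0 < r) : (DF C).ncard = 2 * n := by
  rw [← Nat.card_coe_set_eq, DF,
    Nat.card_congr (Equiv.ofInjective (Fm C) (Fm_inj C hC hr)).symm]
  simp [Nat.card_eq_fintype_card]
  omega

lemma word_of_vec : ∀ (N : ℕ) (b : Fin n → ℤ), (∑ i, |b i|) ≤ (N:ℤ) →
    ∃ l : List (Multiplicative (Aq C)), (∀ a ∈ l, a ∈ DF C) ∧ l.length ≤ N ∧
      l.prod = Multiplicative.ofAdd (b : Aq C) := by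
  intro N
  induction N with
  | zero =>
    intro b hb
    have hb0 : b = 0 := norm_le_zero_eq_zero (by exact_mod_cast hb)
    subst hb0
    exact ⟨[], by simp, by simp, by simp⟩
  | succ N ih =>
    intro b hb
    by_cases hb0 : b = 0
    · subst hb0; exact ⟨[], by simp, by simp, by simp⟩
    · have hex : ∃ i, b i ≠ 0 := by
        by_contra h; push_neg at h; exact hb0 (funext h)
      obtain ⟨i, hbi⟩ := hex
      set s : ℤ := if 0 < b i then 1 else -1 with hs
      set b' := b - Pi.single i s with hb'
      have hdiff : ∀ j, j ≠ i → b' j = b j := by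
        intro j hj; simp [hb', Pi.single_eq_of_ne hj]
      have hii : |b' i| + 1 = |b i| := by
        simp only [hb', Pi.sub_apply, Pi.single_eq_same]
        rcases lt_trichotomy (b i) 0 with h | h | h
        · rw [hs, if_neg (by omega), abs_of_nonpos (by omega), abs_of_neg h]; ring
        · exact absurd h hbi
        · rw [hs, if_pos h, abs_of_nonneg (by omega), abs_of_pos h]; ring
      have hnorm : (∑ j, |b' j|) + 1 = ∑ j, |b j| := by
        rw [← Finset.add_sum_erase _ (fun j => |b' j|) (Finset.mem_univ i),
            ← Finset.add_sum_erase _ (fun j => |b j|) (Finset.mem_univ i)]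
        have : ∑ j ∈ Finset.univ.erase i, |b' j| = ∑ j ∈ Finset.univ.erase i, |b j| :=
          Finset.sum_congr rfl (fun j hj => by rw [hdiff j (Finset.mem_erase.mp hj).1])
        omega
      obtain ⟨l, hl, hlen, hprod⟩ := ih b' (by push_cast at hb ⊢; omega)
      refine ⟨l ++ [Multiplicative.ofAdd ((Pi.single i s : Fin n → ℤ) : Aq C)], ?_, ?_, ?_⟩
      · intro a ha
        rcases List.mem_append.mp ha with h | h
        · exact hl a h
        · rw [List.mem_singleton.mp h]
          by_cases hpos : 0 < b i
          · exact ⟨Sum.inl i, by simp [Fm, hs, if_pos hpos, sgl]⟩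
          · exact ⟨Sum.inr i, by simp [Fm, hs, if_neg hpos, sgl, single_neg']⟩
      · simp only [List.length_append, List.length_singleton]; omega
      · have hback : b' + Pi.single i s = b := by rw [hb']; abel
        rw [List.prod_append, hprod, List.prod_singleton, ← ofAdd_add,
          ← QuotientAddGroup.mk_add, hback]

lemma vec_of_word : ∀ l : List (Multiplicative (Aq C)), (∀ a ∈ l, a ∈ DF C) →
    ∃ b : Fin n → ℤ, (∑ i, |b i|) ≤ (l.length:ℤ) ∧
      Multiplicative.ofAdd (b : Aq C) = l.prod := by
  intro l
  induction l with
  | nil => exact fun _ => ⟨0, by simp, by simp⟩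
  | cons a l ih =>
    intro hmem
    obtain ⟨b', hb', hprod⟩ := ih (fun x hx => hmem x (List.mem_cons_of_mem a hx))
    obtain ⟨s, hsa⟩ := hmem a (List.mem_cons_self)
    have key : ∀ u : Fin n → ℤ, (∑ j, |u j|) = 1 →
        Multiplicative.ofAdd ((u : Fin n → ℤ) : Aq C) = a →
        ∃ b : Fin n → ℤ, (∑ i, |b i|) ≤ ((a :: l).length:ℤ) ∧
          Multiplicative.ofAdd ((b : Fin n → ℤ) : Aq C) = (a :: l).prod := by
      intro u hu ha
      refine ⟨u + b', ?_, ?_⟩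
      · calc (∑ j, |(u + b') j|) ≤ ∑ j, (|u j| + |b' j|) :=
              Finset.sum_le_sum (fun j _ => abs_add_le _ _)
        _ = (∑ j, |u j|) + ∑ j, |b' j| := Finset.sum_add_distrib
        _ ≤ ((a :: l).length:ℤ) := by
            rw [hu, List.length_cons]; push_cast; omega
      · rw [QuotientAddGroup.mk_add, ofAdd_add, ha, hprod, List.prod_cons]
    rcases s with i | i
    · exact key (sgl i) (norm_sgl i) (by rw [← hsa]; rfl)
    · exact key (-sgl i) (by rw [norm_neg', norm_sgl]) (by rw [← hsa]; rfl)

lemma exists_far (hC : IsLinearPLCode n r C) (hn : 0 < n) (hr : 0 < r) :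
    ∃ x : Fin n → ℤ, ∀ c ∈ C, (r:ℤ) ≤ ∑ i, |x i - c i| := by
  by_contra hcon
  push_neg at hcon
  set x : Fin n → ℤ := Pi.single ⟨0, hn⟩ (r:ℤ) with hx
  obtain ⟨c, hc, hlt⟩ := hcon x
  obtain ⟨c0, _, huniq⟩ := hC x
  have hxnorm : (∑ i, |x i|) = (r:ℤ) := by
    rw [hx, norm_single, abs_of_nonneg (by positivity)]
  have e1 := huniq c ⟨hc, le_of_lt hlt⟩
  have e2 := huniq 0 ⟨C.zero_mem, by simpa using le_of_eq hxnorm⟩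
  rw [← e2] at e1
  subst e1
  simp only [Pi.zero_apply, sub_zero] at hlt
  omega

theorem forward {n r : ℕ} (hn : 0 < n) (hr : 0 < r) (C : AddSubgroup (Fin n → ℤ))
    (hC : IsLinearPLCode n r C) :
    ∃ (G : Type) (_ : CommGroup G) (_ : Fintype G) (D : Set G),
      Nat.card G = ∑ i ∈ Finset.range (min n r + 1), 2 ^ i * n.choose i * r.choose i ∧
      D⁻¹ = D ∧ (1 : G) ∉ D ∧ D.ncard = 2 * n ∧ (cayleyGraph G D).diam = r := by
  classical
  haveI : Fintype (Aq C) := Fintype.ofEquiv _ (ballEquiv C hC)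
  have hupper : ∀ u v : Multiplicative (Aq C),
      (cayleyGraph (Multiplicative (Aq C)) (DF C)).edist u v ≤ (r : ℕ∞) := by
    intro u v
    obtain ⟨b, hb, hπ⟩ := hsurj C hC (Multiplicative.toAdd v - Multiplicative.toAdd u)
    obtain ⟨l, hl, hlen, hprod⟩ := word_of_vec C r b (mem_ballF.mp hb)
    have hv : u * l.prod = v := by
      rw [hprod, hπ]
      conv_lhs => rw [← ofAdd_toAdd u]
      rw [← ofAdd_add]
      simp
    calc (cayleyGraph (Multiplicative (Aq C)) (DF C)).edist u v
        = (cayleyGraph (Multiplicative (Aq C)) (DF C)).edist u (u * l.prod) := by rw [hv]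
      _ ≤ (l.length : ℕ∞) := edist_le_word (h1D C hC hr) u l hl
      _ ≤ (r : ℕ∞) := by exact_mod_cast hlen
  have hlower : ∃ X : Multiplicative (Aq C),
      (r : ℕ∞) ≤ (cayleyGraph (Multiplicative (Aq C)) (DF C)).edist 1 X := by
    obtain ⟨x0, hx0⟩ := exists_far C hC hn hr
    refine ⟨Multiplicative.ofAdd ((x0 : Fin n → ℤ) : Aq C), ?_⟩
    set X := Multiplicative.ofAdd ((x0 : Fin n → ℤ) : Aq C) with hX
    have hne : (cayleyGraph (Multiplicative (Aq C)) (DF C)).edist 1 X ≠ ⊤ := by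
      intro h
      have := hupper 1 X
      rw [h] at this
      exact absurd (top_le_iff.mp this) (by simp)
    have hreach := SimpleGraph.reachable_of_edist_ne_top hne
    obtain ⟨p, hp⟩ := hreach.exists_walk_length_eq_edist
    obtain ⟨l, hl, hlen, hprod⟩ := walk_to_word (hDinv C) p
    rw [one_mul] at hprod
    obtain ⟨b, hbn, hbp⟩ := vec_of_word C l hl
    rw [hprod, hX, Multiplicative.ofAdd.apply_eq_iff_eq] at hbp
    have hcmem : x0 - b ∈ C := by
      rw [← QuotientAddGroup.eq_iff_sub_mem]
      exact hbp.symm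
    have hfar := hx0 (x0 - b) hcmem
    have hbb : (∑ i, |x0 i - (x0 - b) i|) = ∑ i, |b i| := by
      apply Finset.sum_congr rfl; intro i _; congr 1; simp
    rw [hbb] at hfar
    have : (r:ℤ) ≤ (l.length:ℤ) := le_trans hfar hbn
    rw [← hp]
    rw [← hlen]
    exact_mod_cast this
  have hediam : (cayleyGraph (Multiplicative (Aq C)) (DF C)).ediam = (r : ℕ∞) := by
    apply le_antisymm
    · exact SimpleGraph.ediam_le_of_edist_le (fun u v => hupper u v)
    · obtain ⟨X, hX⟩ := hlower
      exact le_trans hX SimpleGraph.edist_le_ediam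
  refine ⟨Multiplicative (Aq C), inferInstance, inferInstance, DF C, ?_, hDinv C,
    h1D C hC hr, hcardD C hC hr, ?_⟩
  · rw [Nat.card_congr (Multiplicative.toAdd (α := Aq C)), card_Aq C hC, card_ballF_min]
  · rw [SimpleGraph.diam, hediam]
    simp

end Forward
section Backward

lemma odd_sum (m a b : ℕ) : Odd (∑ i ∈ Finset.range (m + 1), 2 ^ i * a.choose i * b.choose i) := by
  rw [Finset.sum_range_succ']
  have h : ∀ i ∈ Finset.range m, 2 ^ (i+1) * a.choose (i+1) * b.choose (i+1)
      = 2 * (2 ^ i * a.choose (i+1) * b.choose (i+1)) := by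
    intro i _; rw [pow_succ]; ring
  rw [Finset.sum_congr rfl h, ← Finset.mul_sum]
  exact ⟨∑ i ∈ Finset.range m, 2 ^ i * a.choose (i+1) * b.choose (i+1), by simp⟩

variable {G : Type} [CommGroup G]

lemma no_involution [Fintype G] (hodd : Odd (Nat.card G)) {a : G} (hne : a ≠ 1) :
    a⁻¹ ≠ a := by
  intro h
  have hsq : a ^ 2 = 1 := by
    rw [pow_two]
    nth_rewrite 1 [← h]
    rw [inv_mul_cancel]

  have h2 : orderOf a ∣ 2 := orderOf_dvd_of_pow_eq_one hsq
  have h3 : orderOf a ∣ Nat.card G := orderOf_dvd_natCard a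
  rcases (Nat.prime_two.eq_one_or_self_of_dvd _ h2) with h5 | h5
  · exact hne (orderOf_eq_one_iff.mp h5)
  · rw [h5] at h3
    rw [Nat.odd_iff] at hodd
    obtain ⟨k, hk⟩ := h3
    omega

lemma pairing [DecidableEq G] : ∀ (m : ℕ) (S : Finset G), (∀ a ∈ S, a⁻¹ ∈ S) →
    (∀ a ∈ S, a⁻¹ ≠ a) → S.card = 2 * m →
    ∃ d : Fin m → G, ∀ a ∈ S, ∃ i, a = d i ∨ a = (d i)⁻¹ := by
  intro m
  induction m with
  | zero =>
    intro S _ _ hcard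
    refine ⟨Fin.elim0, fun a ha => ?_⟩
    rw [Nat.mul_zero, Finset.card_eq_zero] at hcard
    exact absurd ha (hcard ▸ Finset.notMem_empty a)
  | succ m ih =>
    intro S hSinv hnofix hcard
    have hne : S.Nonempty := Finset.card_pos.mp (by omega)
    obtain ⟨a, ha⟩ := hne
    have hainv : a⁻¹ ∈ S := hSinv a ha
    have hanein : a⁻¹ ∈ S.erase a := Finset.mem_erase.mpr ⟨hnofix a ha, hainv⟩
    set S' := (S.erase a).erase a⁻¹ with hS'
    have hcard' : S'.card = 2 * m := by
      rw [hS', Finset.card_erase_of_mem hanein, Finset.card_erase_of_mem ha]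
      omega
    have hmem' : ∀ b, b ∈ S' → b ∈ S ∧ b ≠ a ∧ b ≠ a⁻¹ := by
      intro b hb
      rw [hS', Finset.mem_erase, Finset.mem_erase] at hb
      exact ⟨hb.2.2, hb.2.1, hb.1⟩
    have hinv' : ∀ b ∈ S', b⁻¹ ∈ S' := by
      intro b hb
      obtain ⟨hbS, hba, hbai⟩ := hmem' b hb
      rw [hS', Finset.mem_erase, Finset.mem_erase]
      refine ⟨?_, ?_, hSinv b hbS⟩
      · intro h; exact hba (by rw [← inv_inv b, h, inv_inv])
      · intro h; exact hbai (by rw [← inv_inv b, h])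
    obtain ⟨d, hd⟩ := ih S' hinv' (fun b hb => hnofix b (hmem' b hb).1) hcard'
    refine ⟨Fin.cons a d, fun b hb => ?_⟩
    by_cases h1 : b = a
    · exact ⟨0, Or.inl (by simp [h1])⟩
    by_cases h2 : b = a⁻¹
    · exact ⟨0, Or.inr (by simp [h2])⟩
    obtain ⟨i, hi⟩ := hd b (by rw [hS', Finset.mem_erase, Finset.mem_erase]; exact ⟨h2, h1, hb⟩)
    exact ⟨i.succ, by simpa [Fin.cons_succ] using hi⟩

variable {n r : ℕ}

def psi (d : Fin n → G) (x : Fin n → ℤ) : G := ∏ i, d i ^ (x i)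

lemma psi_add (d : Fin n → G) (x y : Fin n → ℤ) :
    psi d (x + y) = psi d x * psi d y := by
  rw [psi, psi, psi, ← Finset.prod_mul_distrib]
  apply Finset.prod_congr rfl
  intro i _
  rw [Pi.add_apply, zpow_add]

lemma psi_zero (d : Fin n → G) : psi d 0 = 1 := by
  simp [psi]

lemma psi_neg (d : Fin n → G) (x : Fin n → ℤ) : psi d (-x) = (psi d x)⁻¹ := by
  have := psi_add d x (-x)
  rw [add_neg_cancel, psi_zero] at this
  exact eq_inv_of_mul_eq_one_right this.symm

lemma psi_sub (d : Fin n → G) (x y : Fin n → ℤ) :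
    psi d (x - y) = psi d x * (psi d y)⁻¹ := by
  rw [sub_eq_add_neg, psi_add, psi_neg]

lemma psi_single (d : Fin n → G) (i : Fin n) (s : ℤ) :
    psi d (Pi.single i s) = d i ^ s := by
  rw [psi, Finset.prod_eq_single i]
  · rw [Pi.single_eq_same]
  · intro j _ hj; rw [Pi.single_eq_of_ne hj, zpow_zero]
  · intro h; exact absurd (Finset.mem_univ i) h

def codeOf (d : Fin n → G) : AddSubgroup (Fin n → ℤ) where
  carrier := {x | psi d x = 1}
  zero_mem' := psi_zero d
  add_mem' := by
    intro x y hx hy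
    simp only [Set.mem_setOf_eq] at *
    rw [psi_add, hx, hy, mul_one]
  neg_mem' := by
    intro x hx
    simp only [Set.mem_setOf_eq] at *
    rw [psi_neg, hx, inv_one]

lemma mem_codeOf {d : Fin n → G} {x : Fin n → ℤ} : x ∈ codeOf d ↔ psi d x = 1 := Iff.rfl

set_option maxHeartbeats 2000000 in
theorem backward (hn : 0 < n) (hr : 0 < r) [Fintype G] (D : Set G)
    (hcard : Nat.card G = ∑ i ∈ Finset.range (min n r + 1), 2 ^ i * n.choose i * r.choose i)
    (hinv : D⁻¹ = D) (h1 : (1 : G) ∉ D) (hnc : D.ncard = 2 * n)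
    (hdiam : (cayleyGraph G D).diam = r) :
    ∃ C : AddSubgroup (Fin n → ℤ), IsLinearPLCode n r C := by
  classical
  have hodd : Odd (Nat.card G) := by rw [hcard]; exact odd_sum _ _ _
  have hDfin : D.Finite := Set.toFinite D
  set S := hDfin.toFinset with hSdef
  have hmemS : ∀ a, a ∈ S ↔ a ∈ D := fun a => Set.Finite.mem_toFinset hDfin
  have hScard : S.card = 2 * n := by
    rw [← hnc]
    exact (Set.ncard_eq_toFinset_card D hDfin).symm
  have hSinv : ∀ a ∈ S, a⁻¹ ∈ S := by
    intro a haS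
    rw [hmemS] at haS ⊢
    rw [← hinv, Set.mem_inv, inv_inv]
    exact haS
  have hnofix : ∀ a ∈ S, a⁻¹ ≠ a :=
    fun a haS => no_involution hodd (fun h => h1 (h ▸ (hmemS a).mp haS))
  obtain ⟨d, hd⟩ := pairing n S hSinv hnofix hScard
  have hdne : (cayleyGraph G D).ediam ≠ ⊤ :=
    SimpleGraph.ediam_ne_top_of_diam_ne_zero (by omega)
  have hediam : (cayleyGraph G D).ediam = (r : ℕ∞) := by
    rw [← ENat.coe_toNat hdne,
      show (cayleyGraph G D).ediam.toNat = (cayleyGraph G D).diam from rfl, hdiam]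
  have hvec : ∀ l : List G, (∀ a ∈ l, a ∈ D) →
      ∃ b : Fin n → ℤ, (∑ i, |b i|) ≤ (l.length:ℤ) ∧ psi d b = l.prod := by
    intro l
    induction l with
    | nil => exact fun _ => ⟨0, by simp, by rw [psi_zero, List.prod_nil]⟩
    | cons a l ih =>
      intro hmem
      obtain ⟨b', hb', hp'⟩ := ih (fun x hx => hmem x (List.mem_cons_of_mem a hx))
      obtain ⟨i, hi⟩ := hd a ((hmemS a).mpr (hmem a (List.mem_cons_self)))
      have key : ∀ s : ℤ, |s| = 1 → d i ^ s = a →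
          ∃ b : Fin n → ℤ, (∑ j, |b j|) ≤ ((a :: l).length:ℤ) ∧ psi d b = (a :: l).prod := by
        intro s hs hds
        refine ⟨(Pi.single i s : Fin n → ℤ) + b', ?_, ?_⟩
        · calc (∑ j, |((Pi.single i s : Fin n → ℤ) + b') j|)
              ≤ ∑ j, (|(Pi.single i s : Fin n → ℤ) j| + |b' j|) :=
                Finset.sum_le_sum (fun j _ => abs_add_le _ _)
          _ = (∑ j, |(Pi.single i s : Fin n → ℤ) j|) + ∑ j, |b' j| := Finset.sum_add_distrib
          _ ≤ ((a :: l).length:ℤ) := by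
              rw [norm_single, hs, List.length_cons]; push_cast; omega
        · rw [psi_add, psi_single, hds, hp', List.prod_cons]
      rcases hi with hi | hi
      · exact key 1 (by simp) (by rw [zpow_one, hi])
      · exact key (-1) (by simp) (by rw [zpow_neg_one, hi])
  have hsurjball : ∀ g : G, ∃ b ∈ ballF n r, psi d b = g := by
    intro g
    have hle : (cayleyGraph G D).edist 1 g ≤ (r:ℕ∞) := hediam ▸ SimpleGraph.edist_le_ediam
    have hner : (cayleyGraph G D).edist 1 g ≠ ⊤ := by
      intro h
      rw [h, top_le_iff] at hle
      exact ENat.coe_ne_top r hle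
    obtain ⟨p, hp⟩ := (SimpleGraph.reachable_of_edist_ne_top hner).exists_walk_length_eq_edist
    obtain ⟨l, hl, hlen, hprod⟩ := walk_to_word hinv p
    rw [one_mul] at hprod
    obtain ⟨b, hbn, hbp⟩ := hvec l hl
    have hplen : (l.length : ℕ∞) ≤ (r:ℕ∞) := by rw [hlen, hp]; exact hle
    have hlr : (l.length:ℤ) ≤ (r:ℤ) := by exact_mod_cast hplen
    exact ⟨b, mem_ballF.mpr (le_trans hbn hlr), by rw [hbp, hprod]⟩
  have hcards : (ballF n r).card = Fintype.card G := by
    rw [card_ballF_min, ← hcard, Nat.card_eq_fintype_card]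
  have himg : (ballF n r).image (psi d) = Finset.univ := by
    apply Finset.eq_univ_of_forall
    intro g
    obtain ⟨b, hb, hpb⟩ := hsurjball g
    exact Finset.mem_image.mpr ⟨b, hb, hpb⟩
  have hinjOn : Set.InjOn (psi d) (ballF n r : Set (Fin n → ℤ)) :=
    Finset.card_image_iff.mp (by rw [himg, Finset.card_univ, hcards])
  refine ⟨codeOf d, fun x => ?_⟩
  obtain ⟨b, hbball, hpb⟩ := hsurjball (psi d x)
  have hxb : ∀ i, x i - (x - b) i = b i := fun i => by simp
  refine ⟨x - b, ⟨?_, ?_⟩, ?_⟩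
  · rw [mem_codeOf, psi_sub, hpb, mul_inv_cancel]
  · calc (∑ i, |x i - (x - b) i|) = ∑ i, |b i| :=
          Finset.sum_congr rfl (fun i _ => by rw [hxb])
    _ ≤ (r:ℤ) := mem_ballF.mp hbball
  · rintro c ⟨hcmem, hcd⟩
    have hxc : x - c ∈ ballF n r := mem_ballF.mpr (by
      calc (∑ i, |(x - c) i|) = ∑ i, |x i - c i| :=
            Finset.sum_congr rfl (fun i _ => by rw [Pi.sub_apply])
      _ ≤ (r:ℤ) := hcd)
    have hpsix : psi d (x - c) = psi d b := by
      rw [psi_sub, mem_codeOf.mp hcmem, inv_one, mul_one, hpb]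
    have heq : x - c = b :=
      hinjOn (Finset.mem_coe.mpr hxc) (Finset.mem_coe.mpr hbball) hpsix
    rw [← heq]
    abel

end Backward

end PLAux

/-- There exists a linear `PL(n,r)`-code if and only if there exist a finite abelian group `G`
of order `|S(n,r)| = ∑_{i=0}^{min(n,r)} 2^i C(n,i) C(r,i)` and a subset `D ⊆ G` with
`D = D⁻¹`, `1 ∉ D`, `|D| = 2n`, such that the Cayley graph `Γ(G,D)` has diameter `r`. -/
theorem linear_PL_iff_cayley (n r : ℕ) (hn : 0 < n) (hr : 0 < r) :
    (∃ C : AddSubgroup (Fin n → ℤ), IsLinearPLCode n r C) ↔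
    (∃ (G : Type) (_ : CommGroup G) (_ : Fintype G) (D : Set G),
      Nat.card G = ∑ i ∈ Finset.range (min n r + 1), 2 ^ i * n.choose i * r.choose i ∧
      D⁻¹ = D ∧ (1 : G) ∉ D ∧ D.ncard = 2 * n ∧
      (cayleyGraph G D).diam = r) := by
  constructor
  · rintro ⟨C, hC⟩
    exact PLAux.forward hn hr C hC
  · rintro ⟨G, hcg, hft, D, hcard, hinv, h1, hnc, hdiam⟩
    letI := hcg
    letI := hft
    exact PLAux.backward hn hr D hcard hinv h1 hnc hdiam
end

section
/- Let n be a positive integer with 5 ∣ 2n²+2n+1 and set m = (2n²+2n+1)/5. Assume that 8n+1 is not a perfect square and that 8n−3 ≠ 5k² for every integer k. Then there is no element T̄ ∈ ℤ[C_5] whose coefficients all lie in {0,1,…,m} and sum to 2n+1, satisfying T̄ = T̄^{(−1)} and T̄² = 2m·C_5 − T̄^{(2)} + 2n in ℤ[C_5]. -/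
/-- For `T = ∑ a_g·g` in the group ring `ℤ[G]` and `t : ℤ`,
`pw T t` is `T^{(t)} = ∑ a_g·g^t`. -/
noncomputable def pw {G : Type} [CommGroup G] (T : MonoidAlgebra ℤ G) (t : ℤ) :
    MonoidAlgebra ℤ G :=
  MonoidAlgebra.ofCoeff (Finsupp.mapDomain (fun g => g ^ t) T.coeff)

/-- The group-ring element `∑_{g ∈ G} g` of `ℤ[G]`. -/
noncomputable def gsum (G : Type) [CommGroup G] [Fintype G] : MonoidAlgebra ℤ G :=
  ∑ g : G, MonoidAlgebra.of ℤ G g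

/-- The cyclic group of order 5, written multiplicatively. -/
abbrev C5 := Multiplicative (ZMod 5)

lemma sumC5 {M : Type*} [AddCommMonoid M] (F : C5 → M) :
    ∑ y : C5, F y = F (Multiplicative.ofAdd 0) + F (Multiplicative.ofAdd 1)
      + F (Multiplicative.ofAdd 2) + F (Multiplicative.ofAdd 3) + F (Multiplicative.ofAdd 4) := by
  show ∑ i : Fin 5, F (Multiplicative.ofAdd i) = _
  rw [Fin.sum_univ_five]; rfl

lemma mulC5 (f g : MonoidAlgebra ℤ C5) (x : C5) :
    (f * g).coeff x = ∑ y : C5, f.coeff y * g.coeff (y⁻¹ * x) := by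
  rw [MonoidAlgebra.coeff_mul_antidiag f g x
    (Finset.univ.map ⟨fun y => (y, y⁻¹ * x), fun a b h => by simpa using congrArg Prod.fst h⟩)]
  · rw [Finset.sum_map]; rfl
  · intro p
    simp only [Finset.mem_map, Finset.mem_univ, Function.Embedding.coeFn_mk, true_and]
    constructor
    · rintro ⟨y, rfl⟩; exact mul_inv_cancel_left y x
    · rintro h
      exact ⟨p.1, by rw [← h]; exact Prod.ext rfl (inv_mul_cancel_left p.1 p.2)⟩

lemma gsumC5 (x : C5) : (gsum C5).coeff x = 1 := by
  rw [gsum, MonoidAlgebra.coeff_sum, Finsupp.finset_sum_apply]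
  simp [MonoidAlgebra.of_apply, MonoidAlgebra.coeff_single, Finsupp.single_apply]

lemma natCastC5 (k : ℕ) (x : C5) :
    ((k : MonoidAlgebra ℤ C5)).coeff x = if x = 1 then (k:ℤ) else 0 := by
  rw [MonoidAlgebra.natCast_def, MonoidAlgebra.coeff_single, Finsupp.single_apply]
  simp [eq_comm]

lemma pw2 (T : MonoidAlgebra ℤ C5) (i : ZMod 5) :
    (pw T 2).coeff (Multiplicative.ofAdd i) = T.coeff (Multiplicative.ofAdd (3 * i)) := by
  have hinj : Function.Injective (fun g : C5 => g ^ (2:ℤ)) := by decide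
  have h : Multiplicative.ofAdd i = (fun g : C5 => g ^ (2:ℤ)) (Multiplicative.ofAdd (3 * i)) := by
    show Multiplicative.ofAdd i = Multiplicative.ofAdd (3*i) ^ (2:ℤ)
    rw [← ofAdd_zsmul, zsmul_eq_mul]
    congr 1
    have : ((2:ℤ) : ZMod 5) = 2 := by norm_num
    rw [this]
    ring_nf
    exact (mul_one i).symm
  rw [pw, MonoidAlgebra.coeff_ofCoeff, h, Finsupp.mapDomain_apply hinj]

lemma pwneg (T : MonoidAlgebra ℤ C5) (i : ZMod 5) :
    (pw T (-1)).coeff (Multiplicative.ofAdd i) = T.coeff (Multiplicative.ofAdd (-i)) := by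
  have hinj : Function.Injective (fun g : C5 => g ^ (-1:ℤ)) := by decide
  have h : Multiplicative.ofAdd i = (fun g : C5 => g ^ (-1:ℤ)) (Multiplicative.ofAdd (-i)) := by
    show Multiplicative.ofAdd i = Multiplicative.ofAdd (-i) ^ (-1:ℤ)
    rw [← ofAdd_zsmul, zsmul_eq_mul]
    push_cast
    ring_nf
  rw [pw, MonoidAlgebra.coeff_ofCoeff, h, Finsupp.mapDomain_apply hinj]

/-- Suppose `5 ∣ 2n²+2n+1`, `m = (2n²+2n+1)/5`, `8n+1` is not a perfect square, and
`8n−3 ≠ 5k²` for all integers `k`. Then there is no `T̄ ∈ ℤ[C₅]` with coefficients in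
`{0,…,m}` summing to `2n+1` such that `T̄ = T̄^{(−1)}` and `T̄² = 2m·C₅ − T̄^{(2)} + 2n`. -/
theorem no_Tbar_C5 (n m : ℕ) (hn : 0 < n) (h5 : 5 ∣ 2 * n ^ 2 + 2 * n + 1)
    (hm : 5 * m = 2 * n ^ 2 + 2 * n + 1)
    (hsq : ¬ ∃ c : ℕ, c ^ 2 = 8 * n + 1)
    (hk : ∀ k : ℤ, 8 * (n : ℤ) - 3 ≠ 5 * k ^ 2) :
    ¬ ∃ T : MonoidAlgebra ℤ C5,
        (∀ g : C5, 0 ≤ T.coeff g ∧ T.coeff g ≤ (m : ℤ)) ∧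
        (∑ g : C5, T.coeff g) = ((2 * n + 1 : ℕ) : ℤ) ∧
        T = pw T (-1) ∧
        T * T = ((2 * m : ℕ) : MonoidAlgebra ℤ C5) * gsum C5 - pw T 2
          + ((2 * n : ℕ) : MonoidAlgebra ℤ C5) := by
  rintro ⟨T, hbd, hsum, hsym, hmul⟩
  set A : ZMod 5 → ℤ := fun i => T.coeff (Multiplicative.ofAdd i) with hA
  -- symmetry
  have hsy : ∀ i : ZMod 5, A i = A (-i) := by
    intro i
    have := Finsupp.ext_iff.mp (congrArg MonoidAlgebra.coeff hsym) (Multiplicative.ofAdd i)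
    rw [pwneg] at this
    exact this
  have h14 : A 1 = A 4 := by rw [hsy 1]; congr 1
  have h23 : A 2 = A 3 := by
    rw [hsy 2]; congr 1
  -- sum
  have hs : A 0 + A 1 + A 2 + A 3 + A 4 = 2 * (n:ℤ) + 1 := by
    have := hsum
    rw [sumC5 (fun y => T.coeff y)] at this
    push_cast at this
    linarith [this]
  -- coefficient equations
  have key : ∀ i : ZMod 5,
      A 0 * A (-0 + i) + A 1 * A (-1 + i) + A 2 * A (-2 + i) + A 3 * A (-3 + i)
        + A 4 * A (-4 + i)
      = 2 * (m:ℤ) - A (3 * i) + (if Multiplicative.ofAdd i = 1 then 2*(n:ℤ) else 0) := by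
    intro i
    have h := Finsupp.ext_iff.mp (congrArg MonoidAlgebra.coeff hmul) (Multiplicative.ofAdd i)
    rw [mulC5, sumC5 (fun y => T.coeff y * T.coeff (y⁻¹ * Multiplicative.ofAdd i))] at h
    rw [show ∀ (X Y Z : MonoidAlgebra ℤ C5) x, (X - Y + Z).coeff x = X.coeff x - Y.coeff x + Z.coeff x
      from fun _ _ _ _ => rfl] at h
    rw [MonoidAlgebra.natCast_def, MonoidAlgebra.coeff_single_mul_apply, gsumC5, pw2,
      natCastC5] at h
    simp only [← ofAdd_neg, ← ofAdd_add] at h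
    push_cast at h
    convert h using 2 <;> ring_nf <;> rfl
  have E0 := key 0
  have E1 := key 1
  have E2 := key 2
  rw [if_pos (by decide)] at E0
  rw [if_neg (by decide)] at E1
  rw [if_neg (by decide)] at E2
  norm_num at E0 E1 E2
  simp only [show ((-1 : ZMod 5)) = 4 by decide, show ((-2 : ZMod 5)) = 3 by decide,
    show ((-3 : ZMod 5)) = 2 by decide, show ((-4 : ZMod 5)) = 1 by decide,
    show ((6 : ZMod 5)) = 1 by decide] at E0 E1 E2
  set a := A 0
  set b := A 1
  set c := A 2
  rw [← h14, ← h23] at E0 E1 E2 hs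
  -- now E0 : a*a + b*b + c*c + c*c + b*b = 2m - a + 2n (roughly)
  have hmz : 5 * (m:ℤ) = 2 * (n:ℤ)^2 + 2 * (n:ℤ) + 1 := by exact_mod_cast hm
  by_cases hbc : b = c
  · -- leads to 8n+1 being a perfect square
    refine hsq ⟨(2*(a-b)+1).natAbs, ?_⟩
    have h2 : (2*(a-b)+1)^2 = 8*(n:ℤ)+1 := by
      linear_combination 4*E0 - 4*E1 - (4*(b-c)+4)*hbc
    have h3 : (((2*(a-b)+1).natAbs : ℤ))^2 = ((8*n+1 : ℕ) : ℤ) := by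
      rw [pow_two, Int.natAbs_mul_self']
      push_cast
      linear_combination h2
    exact_mod_cast h3
  · -- leads to 8n−3 = 5k²
    have hfac : (b - c) * (2*a - b - c - 1) = 0 := by linear_combination E1 - E2
    have heq : 2*a = b + c + 1 := by
      rcases mul_eq_zero.mp hfac with h | h
      · exact absurd (sub_eq_zero.mp h) hbc
      · linarith
    have h5a : 5*a = 2*(n:ℤ) + 3 := by linarith
    have hbc2 : 2*(b*c) = 4*(m:ℤ) - 8*a^2 + 4*a := by
      linear_combination E1 + E2 + (4*a+b+c)*heq
    exact hk (b - c) (by linear_combination (-8*(n:ℤ)-20*a)*h5a + 10*hbc2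
      + 5*(2*a+b+c-1)*heq + 8*hmz)
end

section
/- Let n be a positive integer with 17 ∣ 2n²+2n+1 and set m = (2n²+2n+1)/17. Assume that 8n+1 is not a perfect square. Then there is no element T̄ ∈ ℤ[C_17] whose coefficients all lie in {0,1,…,m} and sum to 2n+1, satisfying T̄ = T̄^{(−1)} and T̄² = 2m·C_17 − T̄^{(2)} + 2n in ℤ[C_17]. -/
/-- The cyclic group of order 17, written multiplicatively. -/
abbrev C17 := Multiplicative (ZMod 17)

section aux

variable (ζ : ℂ) (hζ : ζ ^ 17 = 1)

lemma pow_val_mod (hζ : ζ ^ 17 = 1) (a : ℕ) : ζ ^ (a % 17) = ζ ^ a := by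
  conv_rhs => rw [← Nat.div_add_mod a 17]
  rw [pow_add, pow_mul, hζ, one_pow, one_mul]

lemma zpow_val_add (hζ : ζ ^ 17 = 1) (u v : ZMod 17) :
    ζ ^ (u + v).val = ζ ^ u.val * ζ ^ v.val := by
  rw [← pow_add, ZMod.val_add, pow_val_mod ζ hζ]

/-- The character `g ↦ ζ^(j·g)` as a monoid hom. -/
noncomputable def psi (hζ : ζ ^ 17 = 1) (j : ZMod 17) : C17 →* ℂ where
  toFun g := ζ ^ (j * Multiplicative.toAdd g).val
  map_one' := by simp
  map_mul' a b := by
    simp only [toAdd_mul, mul_add]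
    exact zpow_val_add ζ hζ _ _

/-- The character as an algebra hom on the group ring. -/
noncomputable def chi (hζ : ζ ^ 17 = 1) (j : ZMod 17) :
    MonoidAlgebra ℤ C17 →ₐ[ℤ] ℂ :=
  MonoidAlgebra.lift ℤ ℂ C17 (psi ζ hζ j)

lemma chi_apply (j : ZMod 17) (T : MonoidAlgebra ℤ C17) :
    chi ζ hζ j T = ∑ g : C17, (T.coeff g : ℂ) * ζ ^ (j * Multiplicative.toAdd g).val := by
  rw [chi, MonoidAlgebra.lift_apply, Finsupp.sum_fintype]
  · simp [psi]
  · intro g; simp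

lemma chi_pw (j : ZMod 17) (T : MonoidAlgebra ℤ C17) (t : ℤ) :
    chi ζ hζ j (pw T t) = chi ζ hζ (j * (t : ZMod 17)) T := by
  rw [chi, MonoidAlgebra.lift_apply, pw, MonoidAlgebra.coeff_ofCoeff, Finsupp.sum_mapDomain_index
    (by intro g; simp) (by intro g b₁ b₂; rw [add_smul]),
    chi, MonoidAlgebra.lift_apply]
  apply Finsupp.sum_congr
  intro g _
  congr 1
  show ζ ^ (j * Multiplicative.toAdd (g ^ t)).val = ζ ^ ((j * (t : ZMod 17)) * Multiplicative.toAdd g).val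
  rw [toAdd_zpow]
  congr 2
  rw [zsmul_eq_mul]
  ring

end aux
section aux2

variable (ζ : ℂ) (hζ : ζ ^ 17 = 1)

/-- Augmentation map: sum of coefficients. -/
noncomputable def eps : MonoidAlgebra ℤ C17 →ₐ[ℤ] ℤ :=
  MonoidAlgebra.lift ℤ ℤ C17 1

lemma eps_apply (T : MonoidAlgebra ℤ C17) : eps T = ∑ g : C17, T.coeff g := by
  rw [eps, MonoidAlgebra.lift_apply, Finsupp.sum_fintype]
  · simp
  · intro g; simp

lemma eps_pw (T : MonoidAlgebra ℤ C17) (t : ℤ) : eps (pw T t) = eps T := by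
  rw [eps, MonoidAlgebra.lift_apply, pw, MonoidAlgebra.coeff_ofCoeff, Finsupp.sum_mapDomain_index
    (by intro g; simp) (by intro g b₁ b₂; rw [add_smul]), MonoidAlgebra.lift_apply]
  simp

lemma sum_val_pow (hprim : IsPrimitiveRoot ζ 17) :
    ∑ u : ZMod 17, ζ ^ u.val = 0 := by
  have h := hprim.geom_sum_eq_zero (by norm_num)
  rw [← h]
  refine Finset.sum_nbij' (fun u => u.val) (fun i => (i : ZMod 17)) ?_ ?_ ?_ ?_ ?_
  · intro u _; exact Finset.mem_range.2 u.val_lt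
  · intro i _; exact Finset.mem_univ _
  · intro u _; exact ZMod.natCast_rightInverse u
  · intro i hi; exact ZMod.val_cast_of_lt (Finset.mem_range.1 hi)
  · intro u _; rfl

lemma chi_gsum (hprim : IsPrimitiveRoot ζ 17) (j : ZMod 17) (hj : j ≠ 0) :
    chi ζ hζ j (gsum C17) = 0 := by
  have : Fact (Nat.Prime 17) := ⟨by norm_num⟩
  rw [gsum, map_sum]
  have h1 : ∀ g : C17, chi ζ hζ j (MonoidAlgebra.of ℤ C17 g)
      = ζ ^ (j * Multiplicative.toAdd g).val := by
    intro g
    rw [chi, MonoidAlgebra.lift_of]; rfl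
  simp only [h1]
  rw [← sum_val_pow ζ hprim]
  apply Fintype.sum_bijective (fun g : C17 => j * Multiplicative.toAdd g)
  · exact (mulLeft_bijective₀ j hj).comp Multiplicative.toAdd.bijective
  · intro g; rfl

end aux2
section aux3

variable (ζ : ℂ) (hζ : ζ ^ 17 = 1)

lemma sum_zmod_range (f : ℕ → ℂ) :
    ∑ u : ZMod 17, f u.val = ∑ i ∈ Finset.range 17, f i := by
  refine Finset.sum_nbij' (fun u => u.val) (fun i => (i : ZMod 17)) ?_ ?_ ?_ ?_ ?_
  · intro u _; exact Finset.mem_range.2 u.val_lt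
  · intro i _; exact Finset.mem_univ _
  · intro u _; exact ZMod.natCast_rightInverse u
  · intro i hi; exact ZMod.val_cast_of_lt (Finset.mem_range.1 hi)
  · intro u _; rfl

open Polynomial in
/-- Key linear-independence lemma: an element of the group ring killed by the
character `chi 1` has all coefficients equal. -/
lemma coeffs_const (hprim : IsPrimitiveRoot ζ 17) (S : MonoidAlgebra ℤ C17)
    (h : chi ζ hζ 1 S = 0) : ∀ g : C17, S.coeff g = S.coeff 1 := by
  set d : ZMod 17 → ℤ := fun u => S.coeff (Multiplicative.ofAdd u) with hd
  set E : ℕ → ℤ := fun i => d (i : ZMod 17) - d 0 with hE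
  have hzero : ∑ u : ZMod 17, ζ ^ u.val = 0 := sum_val_pow ζ hprim
  have h2 : ∑ u : ZMod 17, (d u : ℂ) * ζ ^ u.val = 0 := by
    rw [chi_apply] at h
    rw [← h]
    refine Fintype.sum_equiv Multiplicative.toAdd.symm _ _ ?_
    intro u
    simp [hd]
  have h3 : ∑ u : ZMod 17, ((E u.val : ℤ) : ℂ) * ζ ^ u.val = 0 := by
    have : ∀ u : ZMod 17, ((E u.val : ℤ) : ℂ) * ζ ^ u.val
        = (d u : ℂ) * ζ ^ u.val - (d 0 : ℂ) * ζ ^ u.val := by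
      intro u
      rw [hE]
      push_cast
      rw [ZMod.natCast_rightInverse u]
      ring
    rw [Finset.sum_congr rfl (fun u _ => this u), Finset.sum_sub_distrib, h2,
      ← Finset.mul_sum, hzero]
    ring
  have h4 : ∑ i ∈ Finset.range 17, ((E i : ℤ) : ℂ) * ζ ^ i = 0 := by
    rw [← sum_zmod_range (fun i => ((E i : ℤ) : ℂ) * ζ ^ i)]; exact h3
  have hE0 : E 0 = 0 := by simp [hE]
  have h5' : ∑ i ∈ Finset.range 16, ((E (i + 1) : ℤ) : ℂ) * ζ ^ (i + 1) = 0 := by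
    rw [Finset.sum_range_succ', hE0] at h4
    simpa using h4
  have h5 : ζ * ∑ i ∈ Finset.range 16, ((E (i + 1) : ℤ) : ℂ) * ζ ^ i = 0 := by
    rw [Finset.mul_sum, ← h5']
    exact Finset.sum_congr rfl (fun i _ => by ring)
  have hζ0 : ζ ≠ 0 := by
    intro h0; rw [h0] at hζ; simp at hζ
  have h6 : ∑ i ∈ Finset.range 16, ((E (i + 1) : ℤ) : ℂ) * ζ ^ i = 0 :=
    (mul_eq_zero.mp h5).resolve_left hζ0
  -- polynomial argument
  set P : ℤ[X] := ∑ i ∈ Finset.range 16, C (E (i + 1)) * X ^ i with hP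
  have haev : aeval ζ P = 0 := by
    rw [hP, map_sum, ← h6]
    refine Finset.sum_congr rfl ?_
    intro i _
    simp [mul_comm]
  have hPz : P = 0 := by
    by_contra hP0
    have hdvd : minpoly ℤ ζ ∣ P :=
      minpoly.isIntegrallyClosed_dvd (hprim.isIntegral (by norm_num)) haev
    have hdeg : (minpoly ℤ ζ).natDegree = 16 := by
      rw [← Polynomial.cyclotomic_eq_minpoly hprim (by norm_num),
        Polynomial.natDegree_cyclotomic]
      norm_num [Nat.totient_prime (by norm_num : Nat.Prime 17)]
    have hle : (minpoly ℤ ζ).natDegree ≤ P.natDegree :=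
      Polynomial.natDegree_le_of_dvd hdvd hP0
    have hub : P.natDegree ≤ 15 := by
      rw [hP]
      refine (Polynomial.natDegree_sum_le _ _).trans ?_
      rw [Finset.fold_max_le]
      constructor
      · norm_num
      · intro i hi
        have hi' := Finset.mem_range.1 hi
        refine (Polynomial.natDegree_C_mul_le _ _).trans ?_
        rw [Polynomial.natDegree_X_pow]
        omega
    omega
  have hEz : ∀ i < 16, E (i + 1) = 0 := by
    intro i hi
    have : P.coeff i = E (i + 1) := by
      rw [hP, Polynomial.finset_sum_coeff]
      rw [Finset.sum_congr rfl (fun j _ => by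
        rw [Polynomial.coeff_C_mul, Polynomial.coeff_X_pow])]
      simp [Finset.sum_ite_eq' (Finset.range 16) i, Finset.mem_range.2 hi]
    rw [hPz] at this
    simpa using this.symm
  -- conclude
  intro g
  have : ∀ u : ZMod 17, d u = d 0 := by
    intro u
    by_cases hu : u = 0
    · rw [hu]
    · have hval : 1 ≤ u.val := by
        rcases Nat.eq_zero_or_pos u.val with h0 | h1
        · exact absurd ((ZMod.val_eq_zero u).1 h0) hu
        · exact h1
      have hlt : u.val - 1 < 16 := by have := u.val_lt; omega
      have := hEz (u.val - 1) hlt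
      have huv : ((u.val - 1 + 1 : ℕ) : ZMod 17) = u := by
        rw [Nat.sub_add_cancel hval]
        exact ZMod.natCast_rightInverse u
      simp only [hE, huv] at this
      omega
  have hg : S.coeff g = d (Multiplicative.toAdd g) := by simp [hd]
  have h1 : S.coeff 1 = d 0 := rfl
  rw [hg, h1, this]

end aux3

/-- Suppose `17 ∣ 2n²+2n+1`, `m = (2n²+2n+1)/17`, and `8n+1` is not a perfect square.
Then there is no `T̄ ∈ ℤ[C₁₇]` with coefficients in `{0,…,m}` summing to `2n+1` such
that `T̄ = T̄^{(−1)}` and `T̄² = 2m·C₁₇ − T̄^{(2)} + 2n`. -/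
theorem no_Tbar_C17 (n m : ℕ) (hn : 0 < n) (h17 : 17 ∣ 2 * n ^ 2 + 2 * n + 1)
    (hm : 17 * m = 2 * n ^ 2 + 2 * n + 1)
    (hsq : ¬ ∃ c : ℕ, c ^ 2 = 8 * n + 1) :
    ¬ ∃ T : MonoidAlgebra ℤ C17,
        (∀ g : C17, 0 ≤ T.coeff g ∧ T.coeff g ≤ (m : ℤ)) ∧
        (∑ g : C17, T.coeff g) = ((2 * n + 1 : ℕ) : ℤ) ∧
        T = pw T (-1) ∧
        T * T = ((2 * m : ℕ) : MonoidAlgebra ℤ C17) * gsum C17 - pw T 2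
          + ((2 * n : ℕ) : MonoidAlgebra ℤ C17) := by
  rintro ⟨T, _hbd, hsum, hsym, heq⟩
  set ζ : ℂ := Complex.exp (2 * Real.pi * Complex.I / 17) with hzdef
  have hprim : IsPrimitiveRoot ζ 17 := Complex.isPrimitiveRoot_exp 17 (by norm_num)
  have hζ : ζ ^ 17 = 1 := hprim.pow_eq_one
  set X : ZMod 17 → ℂ := fun j => chi ζ hζ j T with hX
  have hepsT : eps T = ((2 * n + 1 : ℕ) : ℤ) := by rw [eps_apply]; exact hsum
  -- decidable facts about ZMod 17
  have d17 : ((17 : ℤ) : ZMod 17) = 0 := by decide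
  have dne1 : (1 : ZMod 17) ≠ 0 := by decide
  have dne2 : (2 : ZMod 17) ≠ 0 := by decide
  have dne3 : (3 : ZMod 17) ≠ 0 := by decide
  have dne4 : (4 : ZMod 17) ≠ 0 := by decide
  have dne8 : (8 : ZMod 17) ≠ 0 := by decide
  have dm12 : (1 * 2 : ZMod 17) = 2 := by decide
  have dm22 : (2 * 2 : ZMod 17) = 4 := by decide
  have dm42 : (4 * 2 : ZMod 17) = 8 := by decide
  have dm82 : (8 * 2 : ZMod 17) = -1 := by decide
  have dm32 : (3 * 2 : ZMod 17) = 6 := by decide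
  have dc12 : ((1 : ZMod 17) * ((2:ℤ) : ZMod 17)) = 2 := by decide
  have dc13 : ((1 : ZMod 17) * ((3:ℤ) : ZMod 17)) = 3 := by decide
  have dc14 : ((1 : ZMod 17) * ((4:ℤ) : ZMod 17)) = 4 := by decide
  have dc18 : ((1 : ZMod 17) * ((8:ℤ) : ZMod 17)) = 8 := by decide
  have dc32 : ((3 : ZMod 17) * ((2:ℤ) : ZMod 17)) = 6 := by decide
  have dc92 : ((9 : ZMod 17) * ((2:ℤ) : ZMod 17)) = 1 := by decide
  have dc98 : ((9 : ZMod 17) * ((8:ℤ) : ZMod 17)) = 4 := by decide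
  have dint3 : ((3:ℤ) : ZMod 17) ≠ 0 := by decide
  have dcast3 : ((3:ℤ) : ZMod 17) = 3 := by decide
  have d63 : ∀ x : ZMod 17, 6 * (((3:ℤ) : ZMod 17) * x) = x := by decide
  have dgen : ∀ u : ZMod 17, u ≠ 0 → ∃ k : Fin 16, (3 : ZMod 17) ^ (k : ℕ) = u := by decide
  have ddec1 : ∀ ν : ZMod 17, 2 * ν ^ 2 + 2 * ν + 1 = 0 → 2 * ν + 1 + (2 * ν + 1) + 1 ≠ 0 := by decide
  have ddec2 : ∀ ν : ZMod 17, 2 * ν ^ 2 + 2 * ν + 1 = 0 → 2 * ν + 1 + (2 * ν + 1) - 1 ≠ 0 := by decide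
  have ddec3 : ∀ ν : ZMod 17, 2 * ν ^ 2 + 2 * ν + 1 = 0 →
      (2 * ν + 1 + (2 * ν + 1)) * (2 * ν + 1 + (2 * ν + 1)) + 1 ≠ 0 := by decide
  -- the basic character equations
  have hXeq : ∀ j : ZMod 17, j ≠ 0 → X j ^ 2 + X (j * 2) = 2 * (n : ℂ) := by
    intro j hj
    have h := congrArg (chi ζ hζ j) heq
    rw [map_mul, map_add, map_sub, map_mul, map_natCast, map_natCast,
      chi_gsum ζ hζ hprim j hj, chi_pw] at h
    rw [hX]
    simp only []
    push_cast at h ⊢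
    linear_combination h
  -- symmetry
  have hXsym : ∀ j : ZMod 17, X (-j) = X j := by
    intro j
    have h := congrArg (chi ζ hζ j) hsym
    rw [chi_pw] at h
    rw [hX]
    simp only []
    convert h.symm using 2
    push_cast
    ring
  -- helper : constant-coefficients consequences
  have main : ∀ S : MonoidAlgebra ℤ C17, chi ζ hζ 1 S = 0 → 17 * S.coeff 1 = eps S := by
    intro S hS
    have hc := coeffs_const ζ hζ hprim S hS
    rw [eps_apply, Finset.sum_congr rfl (fun g _ => hc g), Finset.sum_const]
    have hcard : (Finset.univ : Finset C17).card = 17 := by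
      simp [Finset.card_univ]
    rw [hcard, nsmul_eq_mul]
    push_cast
    ring
  have zeroed : ∀ T₁ T₂ : MonoidAlgebra ℤ C17, chi ζ hζ 1 (T₁ - T₂) = 0 →
      eps (T₁ - T₂) = 0 → T₁ = T₂ := by
    intro T₁ T₂ hchi heps
    have h17' := main _ hchi
    rw [heps] at h17'
    have h1 : (T₁ - T₂).coeff 1 = 0 := by omega
    have hc := coeffs_const ζ hζ hprim _ hchi
    ext g
    have hg := hc g
    rw [h1] at hg
    rw [MonoidAlgebra.coeff_sub, Finsupp.sub_apply] at hg
    omega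
  have tomod : ∀ S : MonoidAlgebra ℤ C17, chi ζ hζ 1 S = 0 →
      ((eps S : ℤ) : ZMod 17) = 0 := by
    intro S hS
    rw [← main S hS, Int.cast_mul]
    rw [d17]
    ring
  -- n mod 17
  have hν : 2 * (n : ZMod 17) ^ 2 + 2 * (n : ZMod 17) + 1 = 0 := by
    have := (ZMod.natCast_eq_zero_iff (2 * n ^ 2 + 2 * n + 1) 17).2 h17
    push_cast at this
    exact this
  -- the four chained equations
  have e1 : X 1 ^ 2 + X 2 = 2 * (n : ℂ) := by
    have := hXeq 1 dne1; rwa [dm12] at this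
  have e2 : X 2 ^ 2 + X 4 = 2 * (n : ℂ) := by
    have := hXeq 2 dne2; rwa [dm22] at this
  have e3 : X 4 ^ 2 + X 8 = 2 * (n : ℂ) := by
    have := hXeq 4 dne4; rwa [dm42] at this
  have e4 : X 8 ^ 2 + X 1 = 2 * (n : ℂ) := by
    have := hXeq 8 dne8
    rw [dm82, hXsym 1] at this
    exact this
  -- chi-values of pw's
  have hchipw : ∀ (t : ℤ) (j : ZMod 17), chi ζ hζ j (pw T t) = X (j * (t : ZMod 17)) := by
    intro t j; rw [chi_pw, hX]
  -- Case A : X 1 = X 4 leads to contradiction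
  have caseA : X 1 = X 4 → False := by
    intro hx14
    have hfac1 : (X 1 - X 2) * (X 1 + X 2 - 1) = 0 := by
      linear_combination e1 - e2 - hx14
    rcases mul_eq_zero.mp hfac1 with h12 | h12
    · -- X 1 = X 2, so T = pw T 2
      have hT2 : T = pw T 2 := by
        apply zeroed
        · rw [map_sub, hchipw]
          rw [dc12]
          rw [hX] at h12 ⊢
          linear_combination h12
        · rw [map_sub, eps_pw, sub_self]
      have h36 : X 6 = X 3 := by
        have : X 6 = chi ζ hζ 3 (pw T 2) := by
          rw [hchipw, dc32]
        rw [this, ← hT2, hX]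
      have e5 : X 3 ^ 2 + X 3 = 2 * (n : ℂ) := by
        have := hXeq 3 dne3
        rwa [dm32, h36] at this
      have e6 : X 1 ^ 2 + X 1 = 2 * (n : ℂ) := by
        linear_combination e1 + h12
      have hfac2 : (X 1 - X 3) * (X 1 + X 3 + 1) = 0 := by
        linear_combination e6 - e5
      rcases mul_eq_zero.mp hfac2 with h13 | h13
      · -- X 1 = X 3, so T = pw T 3, coefficients constant off identity
        have hT3 : T = pw T 3 := by
          apply zeroed
          · rw [map_sub, hchipw]
            rw [dc13]
            rw [hX] at h13 ⊢
            linear_combination h13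
          · rw [map_sub, eps_pw, sub_self]
        -- coefficient constancy on nonzero elements
        have hinj : Function.Injective (fun g : C17 => g ^ (3:ℤ)) := by
          intro a b hab
          have h' := congrArg Multiplicative.toAdd hab
          simp only [toAdd_zpow, zsmul_eq_mul] at h'
          have h'' : Multiplicative.toAdd a = Multiplicative.toAdd b := by
            calc Multiplicative.toAdd a = 6 * (((3:ℤ) : ZMod 17) * Multiplicative.toAdd a) :=
                  (d63 _).symm
              _ = 6 * (((3:ℤ) : ZMod 17) * Multiplicative.toAdd b) := by rw [h']
              _ = Multiplicative.toAdd b := d63 _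
          exact Multiplicative.toAdd.injective h''
        have hmap : ∀ g : C17, T.coeff (g ^ (3:ℤ)) = T.coeff g := by
          intro g
          conv_lhs => rw [hT3]
          rw [pw]
          exact Finsupp.mapDomain_apply hinj T.coeff g
        have hmul3 : ∀ u : ZMod 17, T.coeff (Multiplicative.ofAdd (3 * u)) = T.coeff (Multiplicative.ofAdd u) := by
          intro u
          have : Multiplicative.ofAdd (3 * u) = (Multiplicative.ofAdd u) ^ (3:ℤ) := by
            apply Multiplicative.toAdd.injective
            simp only [toAdd_zpow, zsmul_eq_mul]
            rw [dcast3]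
            rfl
          rw [this, hmap]
        have hpow3 : ∀ k : ℕ, T.coeff (Multiplicative.ofAdd ((3 : ZMod 17) ^ k)) =
            T.coeff (Multiplicative.ofAdd 1) := by
          intro k
          induction k with
          | zero => simp
          | succ k ih =>
            rw [pow_succ, mul_comm, hmul3]
            exact ih
        have hgen := dgen
        have hconst : ∀ u : ZMod 17, u ≠ 0 →
            T.coeff (Multiplicative.ofAdd u) = T.coeff (Multiplicative.ofAdd 1) := by
          intro u hu
          obtain ⟨k, hk⟩ := hgen u hu
          rw [← hk, hpow3]
        -- compute X 1 = α - β
        set α : ℤ := T.coeff 1 with hα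
        set β : ℤ := T.coeff (Multiplicative.ofAdd 1) with hβ
        have hzero : ∑ u : ZMod 17, ζ ^ u.val = 0 := sum_val_pow ζ hprim
        have hX1 : X 1 = ((α - β : ℤ) : ℂ) := by
          rw [hX]
          simp only []
          rw [chi_apply]
          have hre : ∀ g : C17, ((T.coeff g : ℤ) : ℂ) * ζ ^ (((1 : ZMod 17) * Multiplicative.toAdd g).val)
              = ((β : ℤ) : ℂ) * ζ ^ (Multiplicative.toAdd g).val
                + (if Multiplicative.toAdd g = 0 then ((α - β : ℤ) : ℂ) else 0)
                  * ζ ^ (Multiplicative.toAdd g).val := by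
            intro g
            rw [one_mul]
            by_cases hg : Multiplicative.toAdd g = 0
            · have hg1 : g = 1 := Multiplicative.toAdd.injective hg
              rw [if_pos hg, hg1]
              push_cast
              ring
            · rw [if_neg hg]
              have : T.coeff g = β := by
                have := hconst (Multiplicative.toAdd g) hg
                simpa using this
              rw [this]
              ring
          rw [Finset.sum_congr rfl (fun g _ => hre g), Finset.sum_add_distrib]
          have hs1 : ∑ g : C17, ((β : ℤ) : ℂ) * ζ ^ (Multiplicative.toAdd g).val = 0 := by
            rw [← Finset.mul_sum]
            have : ∑ g : C17, ζ ^ (Multiplicative.toAdd g).val = ∑ u : ZMod 17, ζ ^ u.val := by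
              exact Fintype.sum_equiv Multiplicative.toAdd _ _ (fun g => rfl)
            rw [this, hzero, mul_zero]
          have hs2 : ∑ g : C17, (if Multiplicative.toAdd g = 0 then ((α - β : ℤ) : ℂ) else 0)
              * ζ ^ (Multiplicative.toAdd g).val = ((α - β : ℤ) : ℂ) := by
            have hswap : ∑ g : C17, (if Multiplicative.toAdd g = 0 then ((α - β : ℤ) : ℂ) else 0)
                * ζ ^ (Multiplicative.toAdd g).val
                = ∑ u : ZMod 17, (if u = 0 then ((α - β : ℤ) : ℂ) else 0) * ζ ^ u.val :=
              Fintype.sum_equiv Multiplicative.toAdd _ _ (fun g => rfl)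
            rw [hswap, Finset.sum_eq_single 0]
            · simp
            · intro u _ hu; rw [if_neg hu, zero_mul]
            · intro h; exact absurd (Finset.mem_univ 0) h
          rw [hs1, hs2, zero_add]
        -- final arithmetic
        have hce : ((α - β : ℤ) : ℂ) ^ 2 + ((α - β : ℤ) : ℂ) = 2 * (n : ℂ) := by
          rw [← hX1]; exact e6
        have hz : (α - β) ^ 2 + (α - β) = 2 * (n : ℤ) := by
          exact_mod_cast hce
        apply hsq
        refine ⟨(2 * (α - β) + 1).natAbs, ?_⟩
        have : ((2 * (α - β) + 1).natAbs : ℤ) ^ 2 = 8 * (n : ℤ) + 1 := by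
          rw [Int.natAbs_sq]
          linear_combination 4 * hz
        exact_mod_cast this
      · -- X 1 + X 3 + 1 = 0
        have hS : chi ζ hζ 1 (T + pw T 3 + 1) = 0 := by
          rw [map_add, map_add, map_one, hchipw]
          rw [dc13]
          rw [hX] at h13
          linear_combination h13
        have hmod := tomod _ hS
        rw [map_add, map_add, map_one, eps_pw, hepsT] at hmod
        push_cast at hmod
        exact ddec1 _ hν hmod
    · -- X 1 + X 2 - 1 = 0
      have hS : chi ζ hζ 1 (T + pw T 2 - 1) = 0 := by
        rw [map_sub, map_add, map_one, hchipw]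
        rw [dc12]
        rw [hX] at h12
        linear_combination h12
      have hmod := tomod _ hS
      rw [map_sub, map_add, map_one, eps_pw, hepsT] at hmod
      push_cast at hmod
      exact ddec2 _ hν hmod
  -- main factorization
  have hfac : (X 1 - X 4) * ((X 2 - X 8) * ((X 1 + X 4) * (X 2 + X 8) + 1)) = 0 := by
    have hA : (X 1 - X 4) * (X 1 + X 4) = X 8 - X 2 := by linear_combination e1 - e3
    have hB : (X 2 - X 8) * (X 2 + X 8) = X 1 - X 4 := by linear_combination e2 - e4
    linear_combination (X 2 - X 8) * (X 2 + X 8) * hA + (X 8 - X 2) * hB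
  rcases mul_eq_zero.mp hfac with h | h
  · exact caseA (by linear_combination h)
  rcases mul_eq_zero.mp h with h | h
  · -- X 2 = X 8 : deduce pw T 2 = pw T 8 hence X 1 = X 4
    have hpw28 : pw T 2 = pw T 8 := by
      apply zeroed
      · rw [map_sub, hchipw, hchipw]
        rw [dc12, dc18]
        linear_combination h
      · rw [map_sub, eps_pw, eps_pw, sub_self]
    have hx14 : X 1 = X 4 := by
      have l1 : chi ζ hζ 9 (pw T 2) = X 1 := by
        rw [hchipw, dc92]
      have l2 : chi ζ hζ 9 (pw T 8) = X 4 := by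
        rw [hchipw, dc98]
      rw [← l1, ← l2, hpw28]
    exact caseA hx14
  · -- (X 1 + X 4)(X 2 + X 8) = -1
    have hS : chi ζ hζ 1 ((T + pw T 4) * (pw T 2 + pw T 8) + 1) = 0 := by
      rw [map_add, map_mul, map_add, map_add, map_one, hchipw, hchipw, hchipw]
      rw [dc14, dc12, dc18]
      rw [hX] at h ⊢
      linear_combination h
    have hmod := tomod _ hS
    rw [map_add, map_mul, map_add, map_add, map_one, eps_pw, eps_pw, eps_pw, hepsT] at hmod
    push_cast at hmod
    exact ddec3 _ hν hmod
end

section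
/- Let n be a positive integer, p an odd prime dividing 2n, and suppose v = 2n²+2n+1 is prime and that 2 is a primitive root modulo v (the residue class of 2 generates (ℤ/vℤ)ˣ). Let f be the multiplicative order of p modulo v, l = min{i ≥ 1 : p^i ≡ 1 or −1 (mod v)}, and λ = max{r ≥ 1 : r ∣ p^l − 1 and r ∣ 2^i − p^j for all nonnegative integers i, j with (i,j) ≠ (0,0) and 2^i ≡ p^j (mod v)}. Let G be an abelian group of order v. If there exists T ∈ ℤ[G] with all coefficients in {0,1} satisfying T = T^{(-1)} and T² = 2·G − T^{(2)} + 2n in ℤ[G], then there exists an element x of the finite field F_{p^f} with x^λ = 1 such that, with θ(x,y) := Σ_{i=0}^{v−2} (x·y)^{2^i} computed in F_{p^f}, the number of y ∈ F_{p^f} with y^v = 1 and θ(x,y) = 1 equals 2n², and the number of y ∈ F_{p^f} with y^v = 1 and θ(x,y) = 0 equals 2n+1. -/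
open Finset

section helpers

variable {F : Type} [Field F]

lemma ZZpow_mod_eq {v : ℕ} {y : F} (hy : y ^ v = 1) (x : ℕ) : y ^ (x % v) = y ^ x := by
  conv_rhs => rw [← Nat.div_add_mod x v]
  rw [pow_add, pow_mul, hy, one_pow, one_mul]

lemma ZZpow_val_cast {v : ℕ} [NeZero v] {y : F} (hy : y ^ v = 1) (x : ℕ) :
    y ^ ((x : ZMod v)).val = y ^ x := by
  rw [ZMod.val_natCast, ZZpow_mod_eq hy]

lemma ZZpow_congr_zmod {v : ℕ} [NeZero v] {y : F} (hy : y ^ v = 1) {a b : ℕ}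
    (h : (a : ZMod v) = (b : ZMod v)) : y ^ a = y ^ b := by
  rw [← ZZpow_val_cast hy a, h, ZZpow_val_cast hy b]

lemma ZZgeom_zero {v : ℕ} {y : F} (hy : y ^ v = 1) (hy1 : y ≠ 1) :
    ∑ i ∈ Finset.range v, y ^ i = 0 := by
  rw [geom_sum_eq hy1 v, hy, sub_self, zero_div]

lemma ZZsum_zmod_val {v : ℕ} [NeZero v] (f : ℕ → F) :
    ∑ a : ZMod v, f a.val = ∑ i ∈ Finset.range v, f i := by
  refine Finset.sum_nbij' (fun a => a.val) (fun i => (i : ZMod v)) ?_ ?_ ?_ ?_ ?_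
  · intro a _; exact Finset.mem_range.mpr (ZMod.val_lt a)
  · intro i _; exact Finset.mem_univ _
  · intro a _; exact ZMod.natCast_rightInverse a
  · intro i hi; exact ZMod.val_natCast_of_lt (Finset.mem_range.mp hi)
  · intro a _; rfl

lemma ZZinner_sum (v : ℕ) (hvp : v.Prime) (hv5 : 5 ≤ v)
    (h2prim : orderOf (2 : ZMod v) = v - 1)
    [DecidableEq F] (u : F) (hu : u ^ v = 1) :
    ∑ i ∈ Finset.range (v - 1), u ^ 2 ^ i = (if u = 1 then (v : F) else 0) - 1 := by
  classical
  haveI : Fact v.Prime := ⟨hvp⟩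
  haveI : NeZero v := ⟨hvp.ne_zero⟩
  have hmem : ∀ i : ℕ, 2 ^ i % v ∈ (Finset.range v).erase 0 := by
    intro i
    refine Finset.mem_erase.mpr ⟨?_, Finset.mem_range.mpr (Nat.mod_lt _ hvp.pos)⟩
    intro h
    have h2 : v ∣ 2 ^ i := Nat.dvd_of_mod_eq_zero h
    have := Nat.le_of_dvd (by norm_num) (hvp.dvd_of_dvd_pow h2)
    omega
  have hcast : ∀ i : ℕ, ((2 ^ i % v : ℕ) : ZMod v) = (2 : ZMod v) ^ i := by
    intro i
    rw [ZMod.natCast_mod]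
    push_cast
    ring
  have hinj : ∀ i ∈ Finset.range (v-1), ∀ j ∈ Finset.range (v-1),
      2 ^ i % v = 2 ^ j % v → i = j := by
    intro i hi j hj hij
    have h2 : (2 : ZMod v) ^ i = (2 : ZMod v) ^ j := by
      rw [← hcast i, ← hcast j, hij]
    exact pow_injOn_Iio_orderOf (x := (2 : ZMod v))
      (by rw [h2prim]; exact Set.mem_Iio.mpr (Finset.mem_range.mp hi))
      (by rw [h2prim]; exact Set.mem_Iio.mpr (Finset.mem_range.mp hj)) h2
  have hsurj : ∀ k ∈ (Finset.range v).erase 0, ∃ i, ∃ (_ : i ∈ Finset.range (v-1)),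
      2 ^ i % v = k := by
    have hcards : ((Finset.range v).erase 0).card ≤ (Finset.range (v-1)).card := by
      rw [Finset.card_erase_of_mem (Finset.mem_range.mpr hvp.pos), Finset.card_range,
        Finset.card_range]
    intro k hk
    obtain ⟨i, hi, hik⟩ := Finset.surj_on_of_inj_on_of_card_le
      (fun i _ => 2 ^ i % v) (fun i hi => hmem i) (fun i j hi hj h => hinj i hi j hj h) hcards k hk
    exact ⟨i, hi, hik.symm⟩
  have hre : ∑ i ∈ Finset.range (v-1), u ^ 2 ^ i = ∑ k ∈ (Finset.range v).erase 0, u ^ k := by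
    refine Finset.sum_bij (fun i _ => 2 ^ i % v) (fun i _ => hmem i) hinj hsurj ?_
    intro i hi
    rw [ZZpow_mod_eq hu]
  rw [hre, Finset.sum_erase_eq_sub (Finset.mem_range.mpr hvp.pos), pow_zero]
  congr 1
  by_cases h1 : u = 1
  · simp [h1]
  · rw [if_neg h1, ZZgeom_zero hu h1]

end helpers

set_option maxHeartbeats 1600000 in
/-- Necessary condition (iii) of Theorem 16 (Zhang–Zhou), case `G = H`: with `p` an odd
prime dividing `2n`, `v = 2n²+2n+1` prime, `2` a primitive root mod `v`, `f` the order of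
`p` mod `v`, `l = min{i ≥ 1 : p^i ≡ ±1 (mod v)}`, and `λ` as in the theorem:
if `T ∈ ℤ[G]` (with `|G| = v`) has `{0,1}` coefficients, `T = T^{(-1)}` and
`T² = 2·G − T^{(2)} + 2n`, then in `F = F_{p^f}` there is `x` with `x^λ = 1` such that,
with `θ(x,y) = ∑_{i=0}^{v−2} (xy)^{2^i}`, the set `{y : y^v = 1, θ(x,y) = 1}` has `2n²`
elements and the set `{y : y^v = 1, θ(x,y) = 0}` has `2n+1` elements. -/
theorem exists_x_counting (n p v f l lam : ℕ) (hn : 0 < n)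
    (hp : p.Prime) (hpodd : p ≠ 2) (hpn : p ∣ 2 * n)
    (hv : v = 2 * n ^ 2 + 2 * n + 1) (hvp : v.Prime)
    (h2prim : orderOf (2 : ZMod v) = v - 1)
    (hf : f = orderOf (p : ZMod v))
    (hl : IsLeast {i : ℕ | 0 < i ∧ ((p : ZMod v) ^ i = 1 ∨ (p : ZMod v) ^ i = -1)} l)
    (hlam : IsGreatest {r : ℕ | 0 < r ∧ r ∣ p ^ l - 1 ∧
        ∀ i j : ℕ, ¬ (i = 0 ∧ j = 0) → (2 : ZMod v) ^ i = (p : ZMod v) ^ j →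
          (r : ℤ) ∣ 2 ^ i - (p : ℤ) ^ j} lam)
    (G : Type) [CommGroup G] [Fintype G] (hG : Fintype.card G = v)
    (T : MonoidAlgebra ℤ G)
    (hT01 : ∀ g : G, T.coeff g = 0 ∨ T.coeff g = 1)
    (hTinv : T = pw T (-1))
    (hTsq : T * T = 2 * gsum G - pw T 2 + ((2 * n : ℕ) : MonoidAlgebra ℤ G))
    (F : Type) [Field F] [Fintype F] (hF : Fintype.card F = p ^ f) :
    ∃ x : F, x ^ lam = 1 ∧
      {y : F | y ^ v = 1 ∧ (∑ i ∈ Finset.range (v - 1), (x * y) ^ 2 ^ i) = 1}.ncard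
        = 2 * n ^ 2 ∧
      {y : F | y ^ v = 1 ∧ (∑ i ∈ Finset.range (v - 1), (x * y) ^ 2 ^ i) = 0}.ncard
        = 2 * n + 1 := by
  classical
  ------------------------------------------------------------------
  -- Numerology
  ------------------------------------------------------------------
  have hpn' : p ∣ n := Nat.Coprime.dvd_of_dvd_mul_left
    ((Nat.coprime_primes hp Nat.prime_two).mpr hpodd) hpn
  have hp3 : 3 ≤ p := by have := hp.two_le; omega
  have hnp : p ≤ n := Nat.le_of_dvd hn hpn'
  have hn3 : 3 ≤ n := le_trans hp3 hnp
  have hpv : p < v := by nlinarith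
  have hv5 : 5 ≤ v := by nlinarith
  haveI : Fact p.Prime := ⟨hp⟩
  haveI : Fact v.Prime := ⟨hvp⟩
  haveI : NeZero v := ⟨hvp.ne_zero⟩
  have hpodd' : Odd p := hp.odd_of_ne_two hpodd
  ------------------------------------------------------------------
  -- v divides p^f - 1 ; characteristic of F
  ------------------------------------------------------------------
  have hpf1 : ((p : ZMod v)) ^ f = 1 := by rw [hf]; exact pow_orderOf_eq_one _
  have hpfpos : 1 ≤ p ^ f := Nat.one_le_pow _ _ hp.pos
  have hvdvd : v ∣ p ^ f - 1 := by
    have : ((p ^ f - 1 : ℕ) : ZMod v) = 0 := by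
      rw [Nat.cast_sub hpfpos]
      push_cast
      rw [hpf1, sub_self]
    exact (ZMod.natCast_eq_zero_iff _ _).mp this
  have hfne : f ≠ 0 := by
    intro h
    rw [h, pow_zero] at hF
    exact absurd hF (by have := Fintype.one_lt_card (α := F); omega)
  haveI hchar : CharP F p := by
    haveI : CharP F (ringChar F) := ringChar.charP F
    obtain ⟨m, hq, hcard⟩ := FiniteField.card F (ringChar F)
    refine ringChar.of_eq ?_
    have h1 : ringChar F ∣ p ^ f := by
      rw [← hF, hcard]; exact dvd_pow_self _ m.2.ne'
    exact (Nat.prime_dvd_prime_iff_eq hq hp).mp (hq.dvd_of_dvd_pow h1)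
  have h2nF : ((2 * n : ℕ) : F) = 0 := (CharP.cast_eq_zero_iff F p _).mpr hpn
  have hvF1 : (v : F) = 1 := by
    have hd : p ∣ v - 1 := by
      refine dvd_trans hpn ⟨n + 1, by rw [hv]; ring_nf; omega⟩
    have h0 : ((v - 1 : ℕ) : F) = 0 := (CharP.cast_eq_zero_iff F p _).mpr hd
    have : v = (v - 1) + 1 := by omega
    rw [this, Nat.cast_add, Nat.cast_one, h0, zero_add]
  ------------------------------------------------------------------
  -- A primitive v-th root of unity ζ in F
  ------------------------------------------------------------------
  obtain ⟨ζu, hζu⟩ : ∃ u : Fˣ, orderOf u = v := by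
    refine exists_prime_orderOf_dvd_card v ?_
    rw [Fintype.card_units, hF]; exact hvdvd
  set ζ : F := (ζu : F) with hζdef
  have hζord : orderOf ζ = v := by rw [hζdef, orderOf_units, hζu]
  have hζv : ζ ^ v = 1 := by rw [← hζord]; exact pow_orderOf_eq_one _
  have hζpow_ne1 : ∀ i : ℕ, ¬ (v ∣ i) → ζ ^ i ≠ 1 := by
    intro i hvi h
    exact hvi (hζord ▸ orderOf_dvd_of_pow_eq_one h)
  have hζ2i_ne1 : ∀ i : ℕ, ζ ^ 2 ^ i ≠ 1 := by
    intro i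
    refine hζpow_ne1 _ ?_
    intro h
    have := Nat.le_of_dvd (by positivity) (hvp.dvd_of_dvd_pow h)
    omega
  ------------------------------------------------------------------
  -- Group structure: the discrete logarithm ℓ
  ------------------------------------------------------------------
  haveI : IsCyclic G := isCyclic_of_prime_card (p := v)
    (by simpa [Nat.card_eq_fintype_card] using hG)
  obtain ⟨φ⟩ : Nonempty (G ≃* Multiplicative (ZMod v)) :=
    ⟨mulEquivOfCyclicCardEq (by simp [Nat.card_eq_fintype_card, hG])⟩
  set ℓ : G → ZMod v := fun g => Multiplicative.toAdd (φ g) with hℓdef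
  have hℓadd : ∀ g h : G, ℓ (g * h) = ℓ g + ℓ h := by
    intro g h; simp [hℓdef, map_mul]
  have hℓone : ℓ 1 = 0 := by simp [hℓdef]
  have hℓinv : ∀ g : G, ℓ g⁻¹ = - ℓ g := by intro g; simp [hℓdef]
  have hℓbij : Function.Bijective ℓ :=
    (Multiplicative.toAdd.bijective.comp φ.bijective)
  ------------------------------------------------------------------
  -- Characters and character sums
  ------------------------------------------------------------------
  set X : F → G → F := fun z g => z ^ (ℓ g).val with hXdef
  have hXmul : ∀ (z : F), z ^ v = 1 → ∀ g h : G, X z (g * h) = X z g * X z h := by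
    intro z hz g h
    simp only [hXdef, hℓadd, ZMod.val_add]
    rw [ZZpow_mod_eq hz, pow_add]
  set χ : (z : F) → z ^ v = 1 → (G →* F) := fun z hz =>
    { toFun := X z, map_one' := by simp [hXdef, hℓone], map_mul' := hXmul z hz } with hχdef
  set Ψ : (z : F) → z ^ v = 1 → (MonoidAlgebra ℤ G →ₐ[ℤ] F) := fun z hz =>
    MonoidAlgebra.lift ℤ F G (χ z hz) with hΨdef
  set S : F → F := fun z => ∑ g : G, ((T.coeff g : ℤ) : F) * X z g with hSdef
  have hχX : ∀ (z : F) (hz : z ^ v = 1) (g : G), χ z hz g = X z g := fun _ _ _ => rfl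
  have hlift : ∀ (z : F) (hz : z ^ v = 1), Ψ z hz T = S z := by
    intro z hz
    rw [hΨdef, MonoidAlgebra.lift_apply, Finsupp.sum_fintype]
    · exact Finset.sum_congr rfl fun g _ => by rw [zsmul_eq_mul]; rfl
    · intro g; simp
  have hliftpw2 : ∀ (z : F) (hz : z ^ v = 1), Ψ z hz (pw T 2) = S (z ^ 2) := by
    intro z hz
    rw [hΨdef, pw, MonoidAlgebra.lift_apply, MonoidAlgebra.coeff_ofCoeff]
    rw [Finsupp.sum_mapDomain_index (by intro g; simp) (by intro a b₁ b₂; rw [add_smul])]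
    rw [Finsupp.sum_fintype]
    · refine Finset.sum_congr rfl fun g _ => ?_
      rw [zsmul_eq_mul]
      congr 1
      have h2 : (g : G) ^ (2 : ℤ) = g * g := by
        rw [show (2:ℤ) = ((2:ℕ):ℤ) by norm_num, zpow_natCast, pow_two]
      rw [h2, map_mul, hχX z hz g]
      simp only [hXdef]
      rw [← pow_add, ← two_mul, pow_mul]
    · intro g; simp
  have hliftgsum : ∀ (z : F) (hz : z ^ v = 1), z ≠ 1 → Ψ z hz (gsum G) = 0 := by
    intro z hz hz1
    rw [gsum, map_sum]
    have h1 : ∀ g : G, Ψ z hz (MonoidAlgebra.of ℤ G g) = X z g := by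
      intro g; rw [hΨdef, MonoidAlgebra.lift_of]; exact hχX z hz g
    rw [Finset.sum_congr rfl fun g _ => h1 g]
    have h2 : ∑ g : G, X z g = ∑ a : ZMod v, z ^ a.val :=
      Fintype.sum_bijective ℓ hℓbij _ _ (fun g => rfl)
    rw [h2, ZZsum_zmod_val (fun i => z ^ i), ZZgeom_zero hz hz1]
  -- the main functional equation
  have heqS : ∀ (z : F), z ^ v = 1 → z ≠ 1 → S (z ^ 2) = - (S z * S z) := by
    intro z hz hz1
    have := congrArg (Ψ z hz) hTsq
    rw [map_mul, map_add, map_sub, map_mul, map_ofNat, map_natCast,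
      hlift z hz, hliftgsum z hz hz1, hliftpw2 z hz] at this
    rw [h2nF] at this
    rw [this]
    ring
  -- Frobenius
  have hfrob : ∀ z : F, (S z) ^ p = S (z ^ p) := by
    intro z
    simp only [hSdef]
    rw [sum_pow_char]
    refine Finset.sum_congr rfl fun g _ => ?_
    rw [mul_pow]
    congr 1
    · rcases hT01 g with h | h <;> rw [h] <;> simp [hp.ne_zero]
    · simp only [hXdef]
      rw [← pow_mul, mul_comm, pow_mul]
  have hfrobiter : ∀ (z : F) (j : ℕ), (S z) ^ (p ^ j) = S (z ^ (p ^ j)) := by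
    intro z j
    induction j with
    | zero => simp
    | succ j ih =>
      rw [pow_succ, pow_mul, ih, hfrob, ← pow_mul, ← pow_succ]
  -- symmetry
  have hsym : ∀ g : G, T.coeff g⁻¹ = T.coeff g := by
    intro g
    have hinj : Function.Injective (fun g : G => g ^ (-1 : ℤ)) := by
      intro a b h
      simpa [zpow_neg_one] using inv_injective (by simpa using h)
    conv_lhs => rw [hTinv]
    rw [pw]
    have := Finsupp.mapDomain_apply hinj T.coeff g
    simpa [zpow_neg_one] using this
  have hSvsub1 : ∀ (z : F), z ^ v = 1 → S (z ^ (v - 1)) = S z := by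
    intro z hz
    simp only [hSdef]
    rw [← Equiv.sum_comp (Equiv.inv G)]
    refine Finset.sum_congr rfl fun g _ => ?_
    simp only [Equiv.inv_apply]
    rw [hsym g]
    congr 1
    simp only [hXdef, hℓinv]
    rw [← pow_mul]
    refine ZZpow_congr_zmod hz ?_
    push_cast
    rw [ZMod.natCast_val, ZMod.natCast_val, ZMod.cast_id, ZMod.cast_id]
    have hv1 : ((v - 1 : ℕ) : ZMod v) = -1 := by
      rw [Nat.cast_sub (by omega), ZMod.natCast_self, Nat.cast_one, zero_sub]
    rw [hv1]
    ring
  ------------------------------------------------------------------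
  -- The element c and iteration along powers of 2
  ------------------------------------------------------------------
  set c : F := - S ζ with hcdef
  have h2iter : ∀ i : ℕ, S (ζ ^ 2 ^ i) = - c ^ 2 ^ i := by
    intro i
    induction i with
    | zero => simp [hcdef]
    | succ i ih =>
      have hzv : (ζ ^ 2 ^ i) ^ v = 1 := by
        rw [← pow_mul, mul_comm, pow_mul, hζv, one_pow]
      have key := heqS (ζ ^ 2 ^ i) hzv (hζ2i_ne1 i)
      rw [ih] at key
      rw [← pow_mul, ← pow_succ] at key
      have hexp : 2 ^ i + 2 ^ i = 2 ^ (i + 1) := by rw [pow_succ]; ring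
      rw [key, neg_mul_neg, ← pow_add, hexp]
  -- iteration along powers of p
  have hpiter : ∀ j : ℕ, S (ζ ^ p ^ j) = - c ^ p ^ j := by
    intro j
    rw [← hfrobiter ζ j]
    have : S ζ = - c := by rw [hcdef]; ring
    rw [this]
    exact Odd.neg_pow (hpodd'.pow) c
  ------------------------------------------------------------------
  -- K = ∑ T.coeff g = 2n+1
  ------------------------------------------------------------------
  set Ψ₁ : MonoidAlgebra ℤ G →ₐ[ℤ] ℤ := MonoidAlgebra.lift ℤ ℤ G (1 : G →* ℤ) with hΨ₁
  set K : ℤ := ∑ g : G, T.coeff g with hK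
  have hKval : K = 2 * (n : ℤ) + 1 := by
    have hlift1 : ∀ A : MonoidAlgebra ℤ G, Ψ₁ A = ∑ g : G, A.coeff g := by
      intro A
      rw [hΨ₁, MonoidAlgebra.lift_apply, Finsupp.sum_fintype]
      · exact Finset.sum_congr rfl fun g _ => by simp
      · intro g; simp
    have h1 : Ψ₁ T = K := hlift1 T
    have h2 : Ψ₁ (gsum G) = (v : ℤ) := by
      rw [gsum, map_sum]
      have : ∀ g : G, Ψ₁ (MonoidAlgebra.of ℤ G g) = 1 := by
        intro g; rw [hΨ₁, MonoidAlgebra.lift_of]; rfl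
      rw [Finset.sum_congr rfl fun g _ => this g, Finset.sum_const, ← hG]
      simp [Finset.card_univ]
    have h3 : Ψ₁ (pw T 2) = K := by
      rw [hΨ₁, pw, MonoidAlgebra.lift_apply, MonoidAlgebra.coeff_ofCoeff]
      rw [Finsupp.sum_mapDomain_index (by intro g; simp) (by intro a b₁ b₂; rw [add_smul])]
      rw [Finsupp.sum_fintype]
      · rw [hK]; exact Finset.sum_congr rfl fun g _ => by simp
      · intro g; simp
    have heq : K * K = 2 * (v : ℤ) - K + (2 * n : ℕ) := by
      have := congrArg Ψ₁ hTsq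
      rw [map_mul, map_add, map_sub, map_mul, map_ofNat, map_natCast, h1, h2, h3] at this
      exact this
    have hK0 : 0 ≤ K := Finset.sum_nonneg fun g _ => by rcases hT01 g with h | h <;> simp [h]
    have hv' : (v : ℤ) = 2 * (n:ℤ) ^ 2 + 2 * n + 1 := by rw [hv]; push_cast; ring
    have h2n : ((2 * n : ℕ) : ℤ) = 2 * (n:ℤ) := by push_cast; ring
    rw [hv', h2n] at heq
    have hfactor : (K - (2*(n:ℤ)+1)) * (K + (2*(n:ℤ)+2)) = 0 := by linear_combination heq
    rcases mul_eq_zero.mp hfactor with h | h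
    · linarith
    · exfalso; have hn' : (0:ℤ) ≤ n := Int.natCast_nonneg n; linarith
  have hKF : ∑ g : G, ((T.coeff g : ℤ) : F) = 1 := by
    have : ((K : ℤ) : F) = ((2 * (n:ℤ) + 1 : ℤ) : F) := by rw [hKval]
    rw [hK] at this
    push_cast at this
    rw [this]
    have : (2 * (n : F)) = ((2 * n : ℕ) : F) := by push_cast; ring
    rw [this, h2nF, zero_add]
  ------------------------------------------------------------------
  -- The map w : G → μ_v and the key θ identity
  ------------------------------------------------------------------
  set w : G → F := fun g => ζ ^ ((-(ℓ g)).val) with hwdef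
  have hwv : ∀ g : G, (w g) ^ v = 1 := by
    intro g
    simp only [hwdef]
    rw [← pow_mul, mul_comm, pow_mul, hζv, one_pow]
  have humul : ∀ g g' : G, ζ ^ (ℓ g).val * w g' = ζ ^ ((ℓ g).val + (-(ℓ g')).val) := by
    intro g g'
    rw [pow_add, hwdef]
  have hukey : ∀ g g' : G, ζ ^ (ℓ g).val * w g' = 1 ↔ g = g' := by
    intro g g'
    rw [humul]
    constructor
    · intro h
      have hdvd := hζord ▸ orderOf_dvd_of_pow_eq_one h
      have hzero : (((ℓ g).val + (-(ℓ g')).val : ℕ) : ZMod v) = 0 :=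
        (ZMod.natCast_eq_zero_iff _ _).mpr hdvd
      push_cast at hzero
      rw [ZMod.natCast_val, ZMod.natCast_val, ZMod.cast_id, ZMod.cast_id] at hzero
      have : ℓ g = ℓ g' := by linear_combination hzero
      exact hℓbij.injective this
    · rintro rfl
      refine ZZpow_congr_zmod hζv (a := (ℓ g).val + (-(ℓ g)).val) (b := 0) ?_ |>.trans (pow_zero ζ)
      push_cast
      rw [ZMod.natCast_val, ZMod.natCast_val, ZMod.cast_id, ZMod.cast_id]
      ring
  -- the θ identity
  have htheta : ∀ g' : G,
      (∑ i ∈ Finset.range (v - 1), (c * w g') ^ 2 ^ i) = 1 - ((T.coeff g' : ℤ) : F) := by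
    intro g'
    have hterm : ∀ i : ℕ, (c * w g') ^ 2 ^ i
        = - ∑ g : G, ((T.coeff g : ℤ) : F) * (ζ ^ (ℓ g).val * w g') ^ 2 ^ i := by
      intro i
      rw [mul_pow]
      have hc2 : c ^ 2 ^ i = - S (ζ ^ 2 ^ i) := by rw [h2iter i]; ring
      rw [hc2]
      simp only [hSdef]
      rw [neg_mul, Finset.sum_mul, neg_inj]
      refine Finset.sum_congr rfl fun g _ => ?_
      have hXz : X (ζ ^ 2 ^ i) g = (ζ ^ (ℓ g).val) ^ 2 ^ i := by
        simp only [hXdef]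
        rw [← pow_mul, mul_comm, pow_mul]
      rw [hXz, mul_pow]
      ring
    rw [Finset.sum_congr rfl fun i _ => hterm i]
    rw [Finset.sum_neg_distrib, Finset.sum_comm]
    have hswap : ∀ g : G, ∑ i ∈ Finset.range (v-1), (((T.coeff g : ℤ) : F) * (ζ ^ (ℓ g).val * w g') ^ 2 ^ i)
        = ((T.coeff g : ℤ) : F) * ((if g = g' then (1:F) else 0) - 1) := by
      intro g
      rw [← Finset.mul_sum]
      congr 1
      have huv : (ζ ^ (ℓ g).val * w g') ^ v = 1 := by
        rw [mul_pow, ← pow_mul, mul_comm (ℓ g).val v, pow_mul, hζv, one_pow, one_mul, hwv]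
      rw [ZZinner_sum v hvp hv5 h2prim _ huv]
      congr 1
      by_cases h : g = g'
      · rw [if_pos ((hukey g g').mpr h), if_pos h, hvF1]
      · rw [if_neg (fun h1 => h ((hukey g g').mp h1)), if_neg h]
    rw [Finset.sum_congr rfl fun g _ => hswap g]
    have : ∑ g : G, ((T.coeff g : ℤ) : F) * ((if g = g' then (1:F) else 0) - 1)
        = ((T.coeff g' : ℤ) : F) - ∑ g : G, ((T.coeff g : ℤ) : F) := by
      rw [Finset.sum_congr rfl (fun g _ => mul_sub ((T.coeff g : ℤ) : F) _ 1)]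
      rw [Finset.sum_sub_distrib]
      congr 1
      · have hite : ∀ g : G, ((T.coeff g : ℤ) : F) * (if g = g' then (1:F) else 0)
            = if g = g' then ((T.coeff g : ℤ) : F) else 0 := fun g => by split <;> simp
        rw [Finset.sum_congr rfl fun g _ => hite g,
          Finset.sum_ite_eq' Finset.univ g' (fun g => ((T.coeff g : ℤ) : F))]
        simp
      · simp
    rw [this, hKF]
    ring
  ------------------------------------------------------------------
  -- c is nonzero
  ------------------------------------------------------------------
  have hT1 : ∀ g : G, ((T.coeff g : ℤ) : F) = 1 → T.coeff g = 1 := by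
    intro g h
    rcases hT01 g with h0 | h1
    · rw [h0] at h; simp at h
    · exact h1
  have hc0 : c ≠ 0 := by
    intro hc
    have hall : ∀ g : G, T.coeff g = 1 := by
      intro g
      have := htheta g
      rw [hc] at this
      have hz : ∀ i : ℕ, ((0: F) * w g) ^ 2 ^ i = 0 := by
        intro i
        rw [zero_mul]
        exact zero_pow (by positivity)
      rw [Finset.sum_congr rfl fun i _ => hz i, Finset.sum_const, smul_zero] at this
      refine hT1 g ?_
      linear_combination this
    have hvK : (∑ g : G, T.coeff g) = (v : ℤ) := by
      rw [Finset.sum_congr rfl fun g _ => hall g, Finset.sum_const, ← hG]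
      simp [Finset.card_univ]
    have h2 : (v : ℤ) = 2 * (n:ℤ) + 1 := by rw [← hvK, ← hK, hKval]
    rw [hv] at h2
    push_cast at h2
    have h3 : (n:ℤ)^2 = 0 := by linarith
    have h4 : (n:ℤ) = 0 := by exact pow_eq_zero_iff (by norm_num) |>.mp h3
    have h5 : n = 0 := by exact_mod_cast h4
    omega
  ------------------------------------------------------------------
  -- c ^ (p ^ l) = c
  ------------------------------------------------------------------
  have hplpos : 1 ≤ p ^ l := Nat.one_le_pow _ _ hp.pos
  have hcl : c ^ p ^ l = c := by
    have hSpl : S (ζ ^ p ^ l) = S ζ := by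
      rcases hl.1.2 with h1 | hm1
      · have hz : ζ ^ p ^ l = ζ ^ 1 := by
          refine ZZpow_congr_zmod hζv ?_
          push_cast
          rw [h1]
        rw [hz, pow_one]
      · have hz : ζ ^ p ^ l = ζ ^ (v - 1) := by
          refine ZZpow_congr_zmod hζv ?_
          push_cast
          rw [hm1, Nat.cast_sub (by omega), ZMod.natCast_self, Nat.cast_one, zero_sub]
        rw [hz, hSvsub1 ζ hζv]
    rw [hpiter l] at hSpl
    have hneg : - c ^ p ^ l = - c := by rw [hSpl, hcdef]; ring
    exact neg_injective hneg
  ------------------------------------------------------------------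
  -- c ^ 2^i = c ^ p^j whenever 2^i ≡ p^j (mod v)
  ------------------------------------------------------------------
  have hij : ∀ i j : ℕ, (2 : ZMod v) ^ i = (p : ZMod v) ^ j → c ^ 2 ^ i = c ^ p ^ j := by
    intro i j hijv
    have hz : ζ ^ 2 ^ i = ζ ^ p ^ j := by
      refine ZZpow_congr_zmod hζv ?_
      push_cast
      rw [hijv]
    have h1 := h2iter i
    have h2 := hpiter j
    rw [hz, h2] at h1
    exact neg_injective h1.symm
  ------------------------------------------------------------------
  -- x := c satisfies c ^ lam = 1
  ------------------------------------------------------------------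
  have hclam : c ^ lam = 1 := by
    set C : Fˣ := Units.mk0 c hc0 with hC
    have hr0 : 0 < orderOf C := orderOf_pos C
    set r : ℕ := orderOf C with hrdef
    have hmem : r ∈ {r : ℕ | 0 < r ∧ r ∣ p ^ l - 1 ∧
        ∀ i j : ℕ, ¬ (i = 0 ∧ j = 0) → (2 : ZMod v) ^ i = (p : ZMod v) ^ j →
          (r : ℤ) ∣ 2 ^ i - (p : ℤ) ^ j} := by
      refine ⟨hr0, ?_, ?_⟩
      · have hCl : C ^ (p ^ l) = C := by
          ext; push_cast; exact hcl
        have hCl' : C ^ (p ^ l - 1) * C = C := by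
          rw [← pow_succ, Nat.sub_add_cancel hplpos, hCl]
        have h1 : C ^ (p ^ l - 1) = 1 := by
          exact mul_right_cancel (hCl'.trans (one_mul C).symm)
        exact orderOf_dvd_of_pow_eq_one h1
      · intro i j hij0 hijv
        have hC2 : C ^ (2 ^ i) = C ^ (p ^ j) := by
          ext; push_cast; exact hij i j hijv
        have hz : C ^ ((2 ^ i : ℤ) - (p : ℤ) ^ j) = 1 := by
          have h' : C ^ (((2 ^ i : ℕ)) : ℤ) = C ^ (((p ^ j : ℕ)) : ℤ) := by
            rw [zpow_natCast, zpow_natCast, hC2]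
          rw [zpow_sub, mul_inv_eq_one]
          convert h' using 2 <;> push_cast <;> ring
        exact (orderOf_dvd_iff_zpow_eq_one (G := Fˣ)).mpr hz
    have hrlam : r ∣ lam := by
      have hlcm : Nat.lcm r lam ∈ {r : ℕ | 0 < r ∧ r ∣ p ^ l - 1 ∧
          ∀ i j : ℕ, ¬ (i = 0 ∧ j = 0) → (2 : ZMod v) ^ i = (p : ZMod v) ^ j →
            (r : ℤ) ∣ 2 ^ i - (p : ℤ) ^ j} := by
        obtain ⟨hl1, hl2, hl3⟩ := hlam.1
        refine ⟨Nat.pos_of_ne_zero (Nat.lcm_ne_zero (by omega) (by omega)),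
          Nat.lcm_dvd hmem.2.1 hl2, ?_⟩
        intro i j h0 hv'
        have d1 := hmem.2.2 i j h0 hv'
        have d2 := hl3 i j h0 hv'
        have hcast : (Nat.lcm r lam : ℤ) = Int.lcm (r : ℤ) (lam : ℤ) := by
          rw [Int.lcm]; push_cast; simp [Int.natAbs_natCast]
        rw [hcast]
        exact Int.dvd_natAbs.mp (Int.natCast_dvd_natCast.mpr (Int.lcm_dvd (Int.dvd_natAbs.mpr d1) (Int.dvd_natAbs.mpr d2)))
      have hle : Nat.lcm r lam ≤ lam := hlam.2 hlcm
      have hdvd : lam ∣ Nat.lcm r lam := Nat.dvd_lcm_right r lam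
      have heq : Nat.lcm r lam = lam := le_antisymm hle (Nat.le_of_dvd hlcm.1 hdvd)
      exact heq ▸ Nat.dvd_lcm_left r lam
    have hClam : C ^ lam = 1 := orderOf_dvd_iff_pow_eq_one.mp hrlam
    calc c ^ lam = ((C ^ lam : Fˣ) : F) := by push_cast; rfl
      _ = 1 := by rw [hClam]; rfl
  ------------------------------------------------------------------
  -- The bijection w and the root-of-unity set
  ------------------------------------------------------------------
  have hwinj : Function.Injective w := by
    intro g g' h
    simp only [hwdef] at h
    have hval := pow_injOn_Iio_orderOf (x := ζ)
      (by rw [hζord]; exact Set.mem_Iio.mpr (ZMod.val_lt _))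
      (by rw [hζord]; exact Set.mem_Iio.mpr (ZMod.val_lt _)) h
    have : -(ℓ g) = -(ℓ g') := ZMod.val_injective v hval
    exact hℓbij.injective (by linear_combination -this)
  have hrange : {y : F | y ^ v = 1} = Set.range w := by
    have hsub : Set.range w ⊆ {y : F | y ^ v = 1} := by
      rintro y ⟨g, rfl⟩; exact hwv g
    refine (Set.eq_of_subset_of_ncard_le hsub ?_ (Set.toFinite _)).symm
    have h1 : (Set.range w).ncard = v := by
      rw [← Set.image_univ, Set.ncard_image_of_injective _ hwinj, Set.ncard_univ,
        Nat.card_eq_fintype_card, hG]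
    rw [h1]
    have h2 : {y : F | y ^ v = 1} ⊆ ((Polynomial.nthRoots v (1 : F)).toFinset : Set F) := by
      intro y hy
      simp only [Set.mem_setOf_eq] at hy
      simp only [Finset.coe_sort_coe, Finset.mem_coe, Multiset.mem_toFinset]
      exact (Polynomial.mem_nthRoots hvp.pos).mpr hy
    refine le_trans (Set.ncard_le_ncard h2 (Set.Finite.ofFinset _ (fun x => Iff.rfl))) ?_
    rw [Set.ncard_coe_finset]
    exact le_trans (Multiset.toFinset_card_le _) (by simpa using Polynomial.card_nthRoots v (1:F))
  ------------------------------------------------------------------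
  -- Counting
  ------------------------------------------------------------------
  have hcard1 : (Finset.univ.filter (fun g : G => T.coeff g = 1)).card = 2 * n + 1 := by
    have hsplit := Finset.sum_filter_add_sum_filter_not Finset.univ (fun g : G => T.coeff g = 1)
      (fun g => T.coeff g)
    have hzero : ∑ g ∈ Finset.univ.filter (fun g : G => ¬ T.coeff g = 1), T.coeff g = 0 := by
      refine Finset.sum_eq_zero fun g hg => ?_
      rcases hT01 g with h | h
      · exact h
      · exact absurd h (Finset.mem_filter.mp hg).2
    have hone : ∑ g ∈ Finset.univ.filter (fun g : G => T.coeff g = 1), T.coeff g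
        = ((Finset.univ.filter (fun g : G => T.coeff g = 1)).card : ℤ) := by
      rw [Finset.sum_congr rfl fun g hg => (Finset.mem_filter.mp hg).2]
      simp
    rw [hzero, add_zero, hone, ← hK, hKval] at hsplit
    exact_mod_cast hsplit
  have hcard0 : (Finset.univ.filter (fun g : G => T.coeff g = 0)).card = 2 * n ^ 2 := by
    have hnot : (Finset.univ.filter (fun g : G => T.coeff g = 0))
        = (Finset.univ.filter (fun g : G => ¬ T.coeff g = 1)) := by
      refine Finset.filter_congr fun g _ => ?_
      rcases hT01 g with h | h <;> simp [h]
    rw [hnot]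
    have := Finset.card_filter_add_card_filter_not (s := Finset.univ)
      (p := fun g : G => T.coeff g = 1)
    rw [Finset.card_univ, hG] at this
    omega
  have hncard : ∀ m : ℤ, {g : G | T.coeff g = m}.ncard = (Finset.univ.filter (fun g : G => T.coeff g = m)).card := by
    intro m
    rw [← Set.ncard_coe_finset]
    congr 1
    ext g
    simp
  refine ⟨c, hclam, ?_, ?_⟩
  · have hseteq : {y : F | y ^ v = 1 ∧ (∑ i ∈ Finset.range (v - 1), (c * y) ^ 2 ^ i) = 1}
        = w '' {g : G | T.coeff g = 0} := by
      ext y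
      constructor
      · rintro ⟨hyv, hyθ⟩
        have hy : y ∈ Set.range w := by rw [← hrange]; exact hyv
        obtain ⟨g, rfl⟩ := hy
        refine ⟨g, ?_, rfl⟩
        show T.coeff g = 0
        rcases hT01 g with h | h
        · exact h
        · exfalso
          rw [htheta g, h] at hyθ
          simp at hyθ
      · rintro ⟨g, hg, rfl⟩
        refine ⟨hwv g, ?_⟩
        have h0 : T.coeff g = 0 := hg
        rw [htheta g, h0]
        simp
    rw [hseteq, Set.ncard_image_of_injective _ hwinj, hncard 0, hcard0]
  · have hseteq : {y : F | y ^ v = 1 ∧ (∑ i ∈ Finset.range (v - 1), (c * y) ^ 2 ^ i) = 0}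
        = w '' {g : G | T.coeff g = 1} := by
      ext y
      constructor
      · rintro ⟨hyv, hyθ⟩
        have hy : y ∈ Set.range w := by rw [← hrange]; exact hyv
        obtain ⟨g, rfl⟩ := hy
        refine ⟨g, ?_, rfl⟩
        show T.coeff g = 1
        rcases hT01 g with h | h
        · exfalso
          rw [htheta g, h] at hyθ
          simp at hyθ
        · exact h
      · rintro ⟨g, hg, rfl⟩
        refine ⟨hwv g, ?_⟩
        have h1 : T.coeff g = 1 := hg
        rw [htheta g, h1]
        simp
    rw [hseteq, Set.ncard_image_of_injective _ hwinj, hncard 1, hcard1]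
end

section
/- Let G be a finite abelian group of order v and let S = a·1 + b·G ∈ ℤ[G] with a, b ∈ ℤ. Suppose positive integers v, m, n satisfy a + v·b = 2n+1 and m·v = 1 + 6n² + 4n(n−1)(n−2)/3, and that S³ = 6m·G − 3S² − 2S + 6n·S in ℤ[G]. Then either v divides 2n+1, or there exists a nonnegative integer c with c² = 24n+1 such that v divides (c²+6c+29)/12 or v divides (c²−6c+29)/12 (both of these quotients being integers in that case). -/
lemma gsum_apply (G : Type) [CommGroup G] [Fintype G] (x : G) : (gsum G).coeff x = 1 := by
  unfold gsum
  rw [MonoidAlgebra.coeff_sum, Finset.sum_apply']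
  simp [MonoidAlgebra.of_apply, MonoidAlgebra.coeff_single, Finsupp.single_apply]

lemma of_mul_gsum (G : Type) [CommGroup G] [Fintype G] (g : G) :
    MonoidAlgebra.of ℤ G g * gsum G = gsum G := by
  unfold gsum
  rw [Finset.mul_sum]
  exact Fintype.sum_equiv (Equiv.mulLeft g) _ _ (fun h => by simp [← map_mul])

lemma gsum_sq (G : Type) [CommGroup G] [Fintype G] :
    gsum G * gsum G = (Fintype.card G : ℤ) • gsum G := by
  have expand : gsum G = ∑ g : G, MonoidAlgebra.of ℤ G g := rfl
  nth_rewrite 1 [expand]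
  rw [Finset.sum_mul]
  simp only [of_mul_gsum, Finset.sum_const, Finset.card_univ]
  rw [Nat.cast_smul_eq_nsmul]

lemma ext_zero (G : Type) [CommGroup G] [Fintype G] (hv2 : 1 < Fintype.card G)
    (p q : ℤ) (h : p • (1 : MonoidAlgebra ℤ G) + q • gsum G = 0) : p = 0 := by
  obtain ⟨x, hx⟩ := Fintype.exists_ne_of_one_lt_card hv2 1
  have h1 : (p • (1 : MonoidAlgebra ℤ G) + q • gsum G).coeff 1 = (0 : MonoidAlgebra ℤ G).coeff 1 := by rw [h]
  have h2 : (p • (1 : MonoidAlgebra ℤ G) + q • gsum G).coeff x = (0 : MonoidAlgebra ℤ G).coeff x := by rw [h]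
  simp only [MonoidAlgebra.coeff_add, MonoidAlgebra.coeff_smul, Finsupp.add_apply,
    Finsupp.smul_apply, gsum_apply, MonoidAlgebra.one_def, MonoidAlgebra.coeff_single,
    MonoidAlgebra.coeff_zero, Finsupp.zero_apply] at h1 h2
  rw [Finsupp.single_eq_same] at h1
  rw [Finsupp.single_eq_of_ne hx] at h2
  simp only [smul_eq_mul, mul_one, mul_zero] at h1 h2
  omega

/-- Let `S = a·1 + b·G ∈ ℤ[G]` with `|G| = v`, `a + vb = 2n+1`,
`mv = 1 + 6n² + 4n(n−1)(n−2)/3` (stated multiplied through by 3), and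
`S³ = 6m·G − 3S² − 2S + 6n·S`. Then `v ∣ 2n+1`, or `24n+1 = c²` for some `c ≥ 0` and
`v` divides `(c²+6c+29)/12` or `(c²−6c+29)/12` (both quotients being integers). -/
theorem cubic_gsum_solution (G : Type) [CommGroup G] [Fintype G]
    (v m n : ℕ) (hv : 0 < v) (hm : 0 < m) (hn : 0 < n)
    (hcard : Fintype.card G = v) (a b : ℤ)
    (S : MonoidAlgebra ℤ G) (hS : S = a • (1 : MonoidAlgebra ℤ G) + b • gsum G)
    (hab : a + (v : ℤ) * b = 2 * (n : ℤ) + 1)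
    (hmv : 3 * (m * v) = 3 + 18 * n ^ 2 + 4 * n * (n - 1) * (n - 2))
    (heq : S ^ 3 = ((6 * m : ℕ) : MonoidAlgebra ℤ G) * gsum G - 3 * S ^ 2 - 2 * S
      + ((6 * n : ℕ) : MonoidAlgebra ℤ G) * S) :
    v ∣ 2 * n + 1 ∨
    ∃ c : ℕ, c ^ 2 = 24 * n + 1 ∧
      12 ∣ c ^ 2 + 6 * c + 29 ∧ 12 ∣ c ^ 2 + 29 - 6 * c ∧
      (v ∣ (c ^ 2 + 6 * c + 29) / 12 ∨ v ∣ (c ^ 2 + 29 - 6 * c) / 12) := by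
  rcases eq_or_lt_of_le (Nat.one_le_iff_ne_zero.mpr hv.ne') with hv1 | hv1
  · exact Or.inl (hv1 ▸ one_dvd _)
  -- extract the identity-coefficient equation
  have hv2 : 1 < Fintype.card G := hcard ▸ hv1
  have key0 : (a^3 + 3*a^2 + 2*a - 6*(n:ℤ)*a) • (1 : MonoidAlgebra ℤ G)
      + (3*a^2*b + 3*a*b^2*(v:ℤ) + b^3*(v:ℤ)^2 + 6*a*b + 3*b^2*(v:ℤ) + 2*b
          - 6*(n:ℤ)*b - 6*(m:ℤ)) • gsum G = 0 := by
    have hE : gsum G * gsum G = ((v : ℤ) : MonoidAlgebra ℤ G) * gsum G := by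
      rw [gsum_sq, hcard, zsmul_eq_mul]
    subst hS
    simp only [zsmul_eq_mul, mul_one] at heq ⊢
    push_cast at heq ⊢
    linear_combination heq - ((3*(a : MonoidAlgebra ℤ G)*b^2 + 3*(b:MonoidAlgebra ℤ G)^2
      + (b:MonoidAlgebra ℤ G)^3*((v:ℤ):MonoidAlgebra ℤ G))
      + (b:MonoidAlgebra ℤ G)^3 * gsum G) * hE
  have key : a * (a^2 + 3*a + 2 - 6*(n:ℤ)) = 0 := by
    linear_combination ext_zero G hv2 _ _ key0
  rcases mul_eq_zero.mp key with ha | ha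
  · -- a = 0 : v ∣ 2n+1
    left
    have : (v:ℤ) ∣ ((2*n+1 : ℕ) : ℤ) := ⟨b, by push_cast; linarith⟩
    exact_mod_cast this
  · -- a² + 3a + 2 = 6n
    right
    set c : ℕ := (2*a+3).natAbs with hc
    have hcz : ((c:ℤ))^2 = (2*a+3)^2 := by rw [hc, Int.natCast_natAbs, sq_abs]
    have hc2 : (c:ℤ)^2 = 24*(n:ℤ)+1 := by rw [hcz]; linear_combination 4*ha
    have cn : c^2 = 24*n+1 := by exact_mod_cast hc2
    obtain ⟨k, hk⟩ : (3:ℤ) ∣ a^2+2 := ⟨2*(n:ℤ)-a, by linarith⟩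
    have hc5 : 5 ≤ c := by nlinarith [cn, hn]
    have h6c : 6*c ≤ c^2+29 := by nlinarith
    have hcastm : ((c^2+29-6*c : ℕ) : ℤ) = (c:ℤ)^2+29-6*(c:ℤ) := by
      push_cast [h6c]; ring
    have hvd : (v:ℤ) ∣ (2*(n:ℤ)+1-a) := ⟨b, by linarith⟩
    rcases Int.natAbs_eq (2*a+3) with hs | hs
    · -- 2a+3 = c
      have hplus : (c:ℤ)^2+6*(c:ℤ)+29 = 12*(k+2*a+4) := by
        rw [← hs]; linear_combination 4*hk
      have hminus : (c:ℤ)^2+29-6*(c:ℤ) = 12*(2*(n:ℤ)+1-a) := by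
        rw [← hs]; linear_combination 4*ha
      have hd1 : (12:ℕ) ∣ c^2+6*c+29 := by
        have : ((12:ℕ):ℤ) ∣ ((c^2+6*c+29 : ℕ):ℤ) := by
          push_cast; exact ⟨k+2*a+4, by linarith⟩
        exact_mod_cast this
      have hd2 : (12:ℕ) ∣ c^2+29-6*c := by
        have : ((12:ℕ):ℤ) ∣ ((c^2+29-6*c : ℕ):ℤ) := by
          rw [hcastm]; exact ⟨2*(n:ℤ)+1-a, by push_cast; linarith⟩
        exact_mod_cast this
      refine ⟨c, cn, hd1, hd2, Or.inr ?_⟩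
      have hval : ((c^2+29-6*c)/12 : ℕ) * 12 = c^2+29-6*c := Nat.div_mul_cancel hd2
      have hvz : (((c^2+29-6*c)/12 : ℕ) : ℤ) = 2*(n:ℤ)+1-a := by
        have h12 : (((c^2+29-6*c)/12 : ℕ) : ℤ) * 12 = ((c^2+29-6*c : ℕ) : ℤ) := by
          exact_mod_cast congrArg (fun t : ℕ => (t:ℤ)) hval
        rw [hcastm] at h12
        linarith
      have : (v:ℤ) ∣ (((c^2+29-6*c)/12 : ℕ) : ℤ) := hvz ▸ hvd
      exact_mod_cast this
    · -- 2a+3 = -c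
      have hplus : (c:ℤ)^2+6*(c:ℤ)+29 = 12*(2*(n:ℤ)+1-a) := by
        have hc' : (c:ℤ) = -(2*a+3) := by omega
        rw [hc']; linear_combination 4*ha
      have hminus : (c:ℤ)^2+29-6*(c:ℤ) = 12*(k+2*a+4) := by
        have hc' : (c:ℤ) = -(2*a+3) := by omega
        rw [hc']; linear_combination 4*hk
      have hd1 : (12:ℕ) ∣ c^2+6*c+29 := by
        have : ((12:ℕ):ℤ) ∣ ((c^2+6*c+29 : ℕ):ℤ) := by
          push_cast; exact ⟨2*(n:ℤ)+1-a, by linarith⟩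
        exact_mod_cast this
      have hd2 : (12:ℕ) ∣ c^2+29-6*c := by
        have : ((12:ℕ):ℤ) ∣ ((c^2+29-6*c : ℕ):ℤ) := by
          rw [hcastm]; exact ⟨k+2*a+4, by push_cast; linarith⟩
        exact_mod_cast this
      refine ⟨c, cn, hd1, hd2, Or.inl ?_⟩
      have hval : ((c^2+6*c+29)/12 : ℕ) * 12 = c^2+6*c+29 := Nat.div_mul_cancel hd1
      have hvz : (((c^2+6*c+29)/12 : ℕ) : ℤ) = 2*(n:ℤ)+1-a := by
        have h12 : (((c^2+6*c+29)/12 : ℕ) : ℤ) * 12 = ((c^2+6*c+29 : ℕ) : ℤ) := by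
          exact_mod_cast congrArg (fun t : ℕ => (t:ℤ)) hval
        have hcastp : ((c^2+6*c+29 : ℕ):ℤ) = (c:ℤ)^2+6*(c:ℤ)+29 := by push_cast; ring
        rw [hcastp] at h12
        linarith
      have : (v:ℤ) ∣ (((c^2+6*c+29)/12 : ℕ) : ℤ) := hvz ▸ hvd
      exact_mod_cast this
end
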